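/- arXiv:math/0612593 — 2 statements merged into one kernel-verified Lean document; each statement's English description precedes it below -/
import Mathlib

section
/- Let A : X → ℝ be θ-Hölder for some θ ∈ (0,1]. For all points x, x̄, x̄̄ ∈ X and every sequence (x̄^l) in X converging to x̄, one has h_A(x, x̄̄) ≤ liminf_{l→+∞} φ_A(x, x̄^l) + h_A(x̄, x̄̄), the inequality being understood in ℝ ∪ {+∞} (any sum involving +∞ equals +∞). In particular, h_A(x, x̄̄) ≤ φ_A(x, x̄) + h_A(x̄, x̄̄) and h_A satisfies the triangle inequality h_A(x, x̄̄) ≤ h_A(x, x̄) + h_A(x̄, x̄̄). -/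
open MeasureTheory Filter Topology

section GLT

variable {X : Type*} [MetricSpace X]

/-- A transitive expanding dynamical system: a continuous, surjective, open,
several-to-one map whose inverse branches are uniformly contracting, and which
is topologically transitive. -/
structure IsExpandingTransitive (T : X → X) : Prop where
  cont : Continuous T
  surj : Function.Surjective T
  isOpenMap : IsOpenMap T
  finite_preimages : ∀ x : X, {y : X | T y = x}.Finite
  transitive : ∀ U V : Set X, IsOpen U → IsOpen V → U.Nonempty → V.Nonempty →
    ∃ n : ℕ, ((T^[n]) ⁻¹' U ∩ V).Nonempty
  contracting : ∃ lam : ℝ, 0 < lam ∧ lam < 1 ∧ ∃ δ : ℝ, 0 < δ ∧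
    ∀ x y : X, dist x y ≤ δ → dist x y ≤ lam * dist (T x) (T y)

/-- `Abar` is the ergodic minimizing value of `A`: the minimum (attained) of
`∫ A dμ` over all `T`-invariant Borel probability measures `μ`. -/
def IsErgMinValue [MeasurableSpace X] (T : X → X) (A : X → ℝ) (Abar : ℝ) : Prop :=
  (∃ μ : Measure X, IsProbabilityMeasure μ ∧ MeasurePreserving T μ μ ∧ (∫ x, A x ∂μ) = Abar) ∧
  ∀ μ : Measure X, IsProbabilityMeasure μ → MeasurePreserving T μ μ → Abar ≤ ∫ x, A x ∂μ

/-- `f` is θ-Hölder. -/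
def IsThetaHolder (θ : ℝ) (f : X → ℝ) : Prop :=
  ∃ C : ℝ, 0 ≤ C ∧ ∀ x y : X, |f x - f y| ≤ C * dist x y ^ θ

/-- `u` is a (continuous) sub-action for `A` with ergodic minimizing value `Abar`. -/
def IsSubaction (T : X → X) (A : X → ℝ) (Abar : ℝ) (u : X → ℝ) : Prop :=
  Continuous u ∧ ∀ x : X, u (T x) - u x + Abar ≤ A x

/-- The contact locus of a sub-action `u`. -/
def contactLocus (T : X → X) (A : X → ℝ) (Abar : ℝ) (u : X → ℝ) : Set X :=
  {x : X | A x = u (T x) - u x + Abar}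

/-- The set `Ω(A)` of non-wandering points with respect to `A`. -/
def nonwanderingSet (T : X → X) (A : X → ℝ) (Abar : ℝ) : Set X :=
  {x : X | ∀ ε : ℝ, 0 < ε → ∃ k : ℕ, 1 ≤ k ∧ ∃ y : X,
    dist x y < ε ∧ dist x (T^[k] y) < ε ∧
    |∑ j ∈ Finset.range k, (A (T^[j] y) - Abar)| < ε}

/-- `u` is a calibrated sub-action: `u x = min_{T y = x} [u y + A y - Abar]`,
the minimum being attained. -/
def IsCalibrated (T : X → X) (A : X → ℝ) (Abar : ℝ) (u : X → ℝ) : Prop :=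
  Continuous u ∧ ∀ x : X,
    (∀ y : X, T y = x → u x ≤ u y + A y - Abar) ∧
    (∃ y : X, T y = x ∧ u x = u y + A y - Abar)

/-- `S_A^ε(x, x', k)`: infimum of Birkhoff sums of `A - Abar` over orbit segments of
length `k` starting within `ε` of `x` and ending within `ε` of `x'`
(`sInf ∅ = ⊤` in `EReal`). -/
noncomputable def birkhoffInf (T : X → X) (A : X → ℝ) (Abar : ℝ) (ε : ℝ) (x x' : X)
    (k : ℕ) : EReal :=
  sInf {v : EReal | ∃ z : X, dist z x < ε ∧ dist (T^[k] z) x' < ε ∧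
    v = ((∑ j ∈ Finset.range k, (A (T^[j] z) - Abar) : ℝ) : EReal)}

/-- The Mañé potential `φ_A(x, x') = lim_{ε→0} inf_{k ≥ 1} S_A^ε(x, x', k)`;
since the quantity is nonincreasing in `ε`, the limit as `ε → 0` is the
supremum over `ε > 0`. -/
noncomputable def manePotential (T : X → X) (A : X → ℝ) (Abar : ℝ) (x x' : X) : EReal :=
  ⨆ ε : {e : ℝ // 0 < e}, ⨅ k : {n : ℕ // 1 ≤ n}, birkhoffInf T A Abar ε.1 x x' k.1

/-- The Peierls barrier `h_A(x, x') = lim_{ε→0} liminf_{k→∞} S_A^ε(x, x', k)`;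
since the quantity is nonincreasing in `ε`, the limit as `ε → 0` is the
supremum over `ε > 0`. -/
noncomputable def peierlsBarrier (T : X → X) (A : X → ℝ) (Abar : ℝ) (x x' : X) : EReal :=
  ⨆ ε : {e : ℝ // 0 < e},
    Filter.liminf (fun k : ℕ => birkhoffInf T A Abar ε.1 x x' k) Filter.atTop

/-- `C` is an irreducible component of `Ω(A)`: an equivalence class of the
relation `x ∼ x' ↔ h_A(x, x') + h_A(x', x) = 0` on `Ω(A)`. -/
def IsIrredComponent (T : X → X) (A : X → ℝ) (Abar : ℝ) (C : Set X) : Prop :=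
  ∃ x ∈ nonwanderingSet T A Abar, C = {y ∈ nonwanderingSet T A Abar |
    peierlsBarrier T A Abar x y + peierlsBarrier T A Abar y x = 0}

/-- The θ-Hölder norm `‖f‖_θ = sup |f| + sup_{x ≠ y} |f x - f y| / d(x,y)^θ`. -/
noncomputable def holderNorm (θ : ℝ) (f : X → ℝ) : ℝ :=
  (⨆ x : X, |f x|) +
    ⨆ p : {p : X × X // p.1 ≠ p.2}, |f p.1.1 - f p.1.2| / dist p.1.1 p.1.2 ^ θ

end GLT



lemma exists_lift {X : Type*} [MetricSpace X] [CompactSpace X] {T : X → X}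
    (hc : Continuous T) (ho : IsOpenMap T) {lam δ : ℝ} (hδ : 0 < δ)
    (hcontr : ∀ x y : X, dist x y ≤ δ → dist x y ≤ lam * dist (T x) (T y)) :
    ∃ δ1 : ℝ, 0 < δ1 ∧ ∀ p q : X, dist q (T p) < δ1 →
      ∃ p', T p' = q ∧ dist p' p ≤ lam * dist q (T p) := by
  by_contra hcon
  push_neg at hcon
  choose p q hd hnl using fun n : ℕ => hcon (1/(n+1)) (by positivity)
  obtain ⟨pl, -, φ, hφ, hφt⟩ := isCompact_univ.tendsto_subseq (fun n => Set.mem_univ (p n))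
  have hTp : Tendsto (fun n => T (p (φ n))) atTop (𝓝 (T pl)) := (hc.tendsto pl).comp hφt
  have hq : Tendsto (fun n => q (φ n)) atTop (𝓝 (T pl)) := by
    rw [tendsto_iff_dist_tendsto_zero]
    have h2 : Tendsto (fun n => 1/((φ n)+1:ℝ)) atTop (𝓝 0) :=
      tendsto_one_div_add_atTop_nhds_zero_nat.comp hφ.tendsto_atTop
    have h1 : Tendsto (fun n => 1/((φ n)+1:ℝ) + dist (T (p (φ n))) (T pl)) atTop (𝓝 0) := by
      simpa using h2.add (tendsto_iff_dist_tendsto_zero.1 hTp)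
    refine squeeze_zero (fun n => dist_nonneg) (fun n => ?_) h1
    calc dist (q (φ n)) (T pl) ≤ dist (q (φ n)) (T (p (φ n))) + dist (T (p (φ n))) (T pl) :=
          dist_triangle _ _ _
      _ ≤ 1/((φ n)+1:ℝ) + dist (T (p (φ n))) (T pl) := by
          have := (hd (φ n)).le; push_cast at this; linarith
  have hO : IsOpen (T '' Metric.ball pl (δ/3)) := ho _ Metric.isOpen_ball
  have hmem : T pl ∈ T '' Metric.ball pl (δ/3) := ⟨pl, Metric.mem_ball_self (by linarith), rfl⟩
  have hev1 : ∀ᶠ n in atTop, q (φ n) ∈ T '' Metric.ball pl (δ/3) :=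
    hq.eventually_mem (hO.mem_nhds hmem)
  have hev2 : ∀ᶠ n in atTop, dist (p (φ n)) pl < δ/3 :=
    hφt.eventually_mem (Metric.ball_mem_nhds pl (by linarith))
  obtain ⟨n, ⟨p', hp'ball, hTp'⟩, hpn⟩ := (hev1.and hev2).exists
  have hb : dist p' pl < δ/3 := Metric.mem_ball.1 hp'ball
  have hle : dist p' (p (φ n)) ≤ δ := by
    calc dist p' (p (φ n)) ≤ dist p' pl + dist pl (p (φ n)) := dist_triangle _ _ _
      _ ≤ δ := by rw [dist_comm pl]; linarith
  have hcc := hcontr p' (p (φ n)) hle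
  rw [hTp'] at hcc
  exact absurd hcc (not_le.2 (hnl (φ n) p' hTp'))

lemma iterate_lift {X : Type*} [MetricSpace X] {T : X → X} {lam δ1 : ℝ}
    (hlam0 : 0 < lam) (hlam1 : lam < 1) (hδ1 : 0 < δ1)
    (hlift : ∀ p q : X, dist q (T p) < δ1 → ∃ p', T p' = q ∧ dist p' p ≤ lam * dist q (T p)) :
    ∀ (n : ℕ) (p q : X), dist q (T^[n] p) < δ1 →
      ∃ w, T^[n] w = q ∧ ∀ j ≤ n, dist (T^[j] w) (T^[j] p) ≤ lam ^ (n-j) * dist q (T^[n] p) := by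
  intro n
  induction n with
  | zero =>
    intro p q h
    refine ⟨q, rfl, fun j hj => ?_⟩
    interval_cases j
    simp
  | succ n ih =>
    intro p q h
    rw [Function.iterate_succ_apply'] at h
    obtain ⟨q₁, hTq₁, hq₁⟩ := hlift (T^[n] p) q h
    have hd0 := dist_nonneg (x := q) (y := T (T^[n] p))
    have hq₁' : dist q₁ (T^[n] p) < δ1 := lt_of_le_of_lt hq₁ (by nlinarith)
    obtain ⟨w, hw, hwd⟩ := ih p q₁ hq₁'
    have hfin : T^[n+1] w = q := by rw [Function.iterate_succ_apply', hw, hTq₁]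
    refine ⟨w, hfin, fun j hj => ?_⟩
    rcases Nat.lt_or_ge j (n+1) with hj' | hj'
    · have hjn : j ≤ n := by omega
      calc dist (T^[j] w) (T^[j] p) ≤ lam^(n-j) * dist q₁ (T^[n] p) := hwd j hjn
        _ ≤ lam^(n-j) * (lam * dist q (T (T^[n] p))) := by
            have := pow_nonneg hlam0.le (n-j)
            exact mul_le_mul_of_nonneg_left hq₁ this
        _ = lam^(n-j+1) * dist q (T (T^[n] p)) := by rw [pow_succ]; ring
        _ = lam^(n+1-j) * dist q (T^[n+1] p) := by
            rw [Function.iterate_succ_apply']; congr 2; omega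
    · have hj2 : j = n+1 := by omega
      subst hj2
      rw [hfin]
      simp

lemma geom_aux {r : ℝ} (h0 : 0 ≤ r) (h1 : r < 1) (n : ℕ) :
    ∑ j ∈ Finset.range n, r^(n-j) ≤ 1/(1-r) := by
  have hsum : ∑ j ∈ Finset.range n, r^(n-j) = ∑ j ∈ Finset.range n, r^(j+1) := by
    rw [← Finset.sum_range_reflect (fun j => r^(j+1)) n]
    refine Finset.sum_congr rfl fun j hj => ?_
    have hj' := Finset.mem_range.1 hj
    congr 1
    omega
  rw [hsum]
  have hg : ∑ j ∈ Finset.range n, r^(j+1) = (∑ j ∈ Finset.range n, r^j) * r := by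
    rw [Finset.sum_mul]
    exact Finset.sum_congr rfl fun j _ => (pow_succ r j)
  have hgeom : (∑ j ∈ Finset.range n, r^j) * (1 - r) = 1 - r^n := by
    have := geom_sum_mul r n
    nlinarith [this]
  have hr : 0 < 1 - r := by linarith
  have hple : (0:ℝ) ≤ r^n := pow_nonneg h0 n
  have hsn : (0:ℝ) ≤ ∑ j ∈ Finset.range n, r^j :=
    Finset.sum_nonneg fun j _ => pow_nonneg h0 j
  rw [hg, le_div_iff₀ hr]
  nlinarith

lemma concat_sum {X : Type*} [MetricSpace X] {T : X → X} {A : X → ℝ} {Abar θ lam δ1 C : ℝ}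
    (hlam0 : 0 < lam) (hlam1 : lam < 1) (hθ0 : 0 < θ) (hC0 : 0 ≤ C) (hδ1 : 0 < δ1)
    (hHolder : ∀ x y : X, |A x - A y| ≤ C * dist x y ^ θ)
    (hlift : ∀ p q : X, dist q (T p) < δ1 → ∃ p', T p' = q ∧ dist p' p ≤ lam * dist q (T p))
    (z1 z2 : X) (k1 k2 : ℕ) (hd : dist z2 (T^[k1] z1) < δ1) :
    ∃ w : X, dist w z1 ≤ dist z2 (T^[k1] z1) ∧ T^[k1 + k2] w = T^[k2] z2 ∧
      ∑ j ∈ Finset.range (k1 + k2), (A (T^[j] w) - Abar) ≤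
        (∑ j ∈ Finset.range k1, (A (T^[j] z1) - Abar)) +
        (∑ j ∈ Finset.range k2, (A (T^[j] z2) - Abar)) +
        C / (1 - lam ^ θ) * dist z2 (T^[k1] z1) ^ θ := by
  obtain ⟨w, hw, hwd⟩ := iterate_lift hlam0 hlam1 hδ1 hlift k1 z1 z2 hd
  set D := dist z2 (T^[k1] z1) with hD
  have hD0 : 0 ≤ D := dist_nonneg
  set r := lam ^ θ with hrdef
  have hr0 : 0 < r := Real.rpow_pos_of_pos hlam0 θ
  have hr1 : r < 1 := Real.rpow_lt_one hlam0.le hlam1 hθ0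
  have hwz1 : dist w z1 ≤ D := by
    have := hwd 0 (Nat.zero_le k1)
    simp only [Function.iterate_zero_apply, Nat.sub_zero] at this
    calc dist w z1 ≤ lam ^ k1 * D := this
      _ ≤ 1 * D := by
          exact mul_le_mul_of_nonneg_right (pow_le_one₀ hlam0.le hlam1.le) hD0
      _ = D := one_mul D
  have hend : T^[k1 + k2] w = T^[k2] z2 := by
    rw [add_comm, Function.iterate_add_apply, hw]
  refine ⟨w, hwz1, hend, ?_⟩
  rw [Finset.sum_range_add]
  have hpart2 : ∀ j ∈ Finset.range k2, A (T^[k1 + j] w) - Abar = A (T^[j] z2) - Abar := by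
    intro j _
    rw [add_comm, Function.iterate_add_apply, hw]
  rw [Finset.sum_congr rfl hpart2]
  have hpow : ∀ m : ℕ, (lam ^ m : ℝ) ^ θ = r ^ m := by
    intro m
    rw [hrdef, ← Real.rpow_natCast lam m, ← Real.rpow_natCast (lam^θ) m,
      ← Real.rpow_mul hlam0.le, ← Real.rpow_mul hlam0.le, mul_comm]
  have hDθ : 0 ≤ D ^ θ := Real.rpow_nonneg hD0 θ
  have hpt : ∀ j ∈ Finset.range k1,
      A (T^[j] w) - Abar ≤ (A (T^[j] z1) - Abar) + (C * D ^ θ) * r ^ (k1 - j) := by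
    intro j hj
    have hjle : j ≤ k1 := (Finset.mem_range.1 hj).le
    have h1 : A (T^[j] w) - A (T^[j] z1) ≤ C * dist (T^[j] w) (T^[j] z1) ^ θ :=
      le_trans (le_abs_self _) (hHolder _ _)
    have h2 : dist (T^[j] w) (T^[j] z1) ^ θ ≤ (lam ^ (k1 - j) * D) ^ θ :=
      Real.rpow_le_rpow dist_nonneg (hwd j hjle) hθ0.le
    have h3 : (lam ^ (k1 - j) * D) ^ θ = r ^ (k1 - j) * D ^ θ := by
      rw [Real.mul_rpow (pow_nonneg hlam0.le _) hD0, hpow]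
    have h4 : C * dist (T^[j] w) (T^[j] z1) ^ θ ≤ C * (r ^ (k1-j) * D ^ θ) := by
      rw [← h3]; exact mul_le_mul_of_nonneg_left h2 hC0
    nlinarith
  calc (∑ j ∈ Finset.range k1, (A (T^[j] w) - Abar)) + ∑ j ∈ Finset.range k2, (A (T^[j] z2) - Abar)
      ≤ (∑ j ∈ Finset.range k1, ((A (T^[j] z1) - Abar) + (C * D ^ θ) * r ^ (k1 - j)))
        + ∑ j ∈ Finset.range k2, (A (T^[j] z2) - Abar) := by
        exact add_le_add_left (Finset.sum_le_sum hpt) _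
    _ = (∑ j ∈ Finset.range k1, (A (T^[j] z1) - Abar))
        + (C * D ^ θ) * (∑ j ∈ Finset.range k1, r ^ (k1 - j))
        + ∑ j ∈ Finset.range k2, (A (T^[j] z2) - Abar) := by
        rw [Finset.sum_add_distrib, ← Finset.mul_sum]
    _ ≤ (∑ j ∈ Finset.range k1, (A (T^[j] z1) - Abar))
        + (∑ j ∈ Finset.range k2, (A (T^[j] z2) - Abar)) + C / (1 - r) * D ^ θ := by
        have hg := geom_aux hr0.le hr1 k1
        have h5 : (C * D ^ θ) * (∑ j ∈ Finset.range k1, r ^ (k1 - j)) ≤ (C * D ^ θ) * (1/(1-r)) :=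
          mul_le_mul_of_nonneg_left hg (by positivity)
        have h6 : (C * D ^ θ) * (1/(1-r)) = C / (1 - r) * D ^ θ := by ring
        linarith
lemma aux_ereal_eq_bot {a : EReal} (h : ∀ M : ℝ, a ≤ (M : EReal)) : a = ⊥ := by
  induction a using EReal.rec with
  | bot => rfl
  | coe r => have := EReal.coe_le_coe_iff.1 (h (r-1)); linarith
  | top => simpa using h 0

lemma aux_ereal_le_coe {a : EReal} {r : ℝ} (h : ∀ η : ℝ, 0 < η → a ≤ ((r + η : ℝ) : EReal)) :
    a ≤ (r : EReal) := by
  induction a using EReal.rec with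
  | bot => exact bot_le
  | coe s =>
    refine EReal.coe_le_coe_iff.2 ?_
    by_contra hs
    push_neg at hs
    have := EReal.coe_le_coe_iff.1 (h ((s - r)/2) (by linarith))
    linarith
  | top =>
    exfalso
    have := h 1 one_pos
    rw [top_le_iff] at this
    exact EReal.coe_ne_top _ this

lemma aux_ereal_cases (a : EReal) (h1 : a ≠ ⊤) (h2 : a ≠ ⊥) : ∃ r : ℝ, a = (r : EReal) := by
  induction a using EReal.rec with
  | bot => exact absurd rfl h2
  | coe r => exact ⟨r, rfl⟩
  | top => exact absurd rfl h1

lemma birkhoffInf_lt_iff {X : Type*} [MetricSpace X] {T : X → X} {A : X → ℝ} {Abar ε : ℝ}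
    {x x' : X} {k : ℕ} {b : EReal} :
    birkhoffInf T A Abar ε x x' k < b ↔ ∃ z : X, dist z x < ε ∧ dist (T^[k] z) x' < ε ∧
      ((∑ j ∈ Finset.range k, (A (T^[j] z) - Abar) : ℝ) : EReal) < b := by
  rw [birkhoffInf, sInf_lt_iff]
  constructor
  · rintro ⟨v, ⟨z, h1, h2, rfl⟩, hv⟩; exact ⟨z, h1, h2, hv⟩
  · rintro ⟨z, h1, h2, hv⟩; exact ⟨_, ⟨z, h1, h2, rfl⟩, hv⟩

lemma birkhoffInf_le {X : Type*} [MetricSpace X] {T : X → X} {A : X → ℝ} {Abar ε : ℝ}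
    {x x' : X} {k : ℕ} {z : X} (h1 : dist z x < ε) (h2 : dist (T^[k] z) x' < ε) :
    birkhoffInf T A Abar ε x x' k ≤ ((∑ j ∈ Finset.range k, (A (T^[j] z) - Abar) : ℝ) : EReal) :=
  sInf_le ⟨z, h1, h2, rfl⟩
lemma phi_le_peierls {X : Type*} [MetricSpace X] (T : X → X) (A : X → ℝ) (Abar : ℝ) (a b : X) :
    manePotential T A Abar a b ≤ peierlsBarrier T A Abar a b := by
  refine iSup_mono fun ε => ?_
  rw [liminf_eq_iSup_iInf_of_nat]
  refine le_trans ?_ (le_iSup (fun n => ⨅ i ≥ n, birkhoffInf T A Abar ε.1 a b i) 1)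
  refine le_iInf fun i => le_iInf fun hi => ?_
  exact iInf_le (fun k : {n : ℕ // 1 ≤ n} => birkhoffInf T A Abar ε.1 a b k.1) ⟨i, hi⟩

lemma central {X : Type*} [MetricSpace X] [CompactSpace X] [Nonempty X]
    {T : X → X} (hT : IsExpandingTransitive T)
    {θ : ℝ} (hθ0 : 0 < θ)
    {A : X → ℝ} (hA : IsThetaHolder θ A) (Abar : ℝ)
    (x xb z : X) (xl : ℕ → X) (hxl : Filter.Tendsto xl Filter.atTop (nhds xb)) :
    peierlsBarrier T A Abar x z ≤
      Filter.liminf (fun l : ℕ => manePotential T A Abar x (xl l)) Filter.atTop +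
        peierlsBarrier T A Abar xb z := by
  obtain ⟨lam, hlam0, hlam1, δ, hδ0, hcontr⟩ := hT.contracting
  obtain ⟨C, hC0, hHolder⟩ := hA
  obtain ⟨δ1, hδ10, hlift⟩ := exists_lift hT.cont hT.isOpenMap hδ0 hcontr
  have hr0 : 0 < lam ^ θ := Real.rpow_pos_of_pos hlam0 θ
  have hr1 : lam ^ θ < 1 := Real.rpow_lt_one hlam0.le hlam1 hθ0
  set K := C / (1 - lam ^ θ) with hKdef
  have hK0 : 0 ≤ K := div_nonneg hC0 (by linarith)
  -- uniform bound on |A - Abar|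
  obtain ⟨bnd, hbnd0, hbnd⟩ : ∃ bnd : ℝ, 0 < bnd ∧ ∀ p : X, |A p - Abar| ≤ bnd := by
    obtain ⟨D0, hD0⟩ := Metric.isBounded_iff.1 (isCompact_univ : IsCompact (Set.univ : Set X)).isBounded
    set x0 : X := Classical.arbitrary X
    have hD00 : 0 ≤ D0 := le_trans dist_nonneg (hD0 (Set.mem_univ x0) (Set.mem_univ x0))
    have h1 : 0 ≤ C * D0 ^ θ := mul_nonneg hC0 (Real.rpow_nonneg hD00 θ)
    refine ⟨C * D0 ^ θ + |A x0 - Abar| + 1, by have := abs_nonneg (A x0 - Abar); linarith,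
      fun p => ?_⟩
    have h2 : |A p - Abar| ≤ |A p - A x0| + |A x0 - Abar| := abs_sub_le _ _ _
    have h3 : |A p - A x0| ≤ C * dist p x0 ^ θ := hHolder _ _
    have h4 : dist p x0 ^ θ ≤ D0 ^ θ :=
      Real.rpow_le_rpow dist_nonneg (hD0 (Set.mem_univ p) (Set.mem_univ x0)) hθ0.le
    have h5 : C * dist p x0 ^ θ ≤ C * D0 ^ θ := mul_le_mul_of_nonneg_left h4 hC0
    linarith
  have hsum_bd : ∀ (p : X) (k : ℕ), |∑ j ∈ Finset.range k, (A (T^[j] p) - Abar)| ≤ k * bnd := by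
    intro p k
    calc |∑ j ∈ Finset.range k, (A (T^[j] p) - Abar)|
        ≤ ∑ j ∈ Finset.range k, |A (T^[j] p) - Abar| := Finset.abs_sum_le_sum_abs _ _
      _ ≤ ∑ _j ∈ Finset.range k, bnd := Finset.sum_le_sum fun j _ => hbnd _
      _ = k * bnd := by rw [Finset.sum_const, Finset.card_range, nsmul_eq_mul]
  refine iSup_le ?_
  rintro ⟨ε, hε⟩
  by_cases hH : peierlsBarrier T A Abar xb z = ⊥
  · -- RHS is ⊥ ; show the liminf is ⊥ as well
    rw [hH, EReal.add_bot]
    refine le_of_eq (aux_ereal_eq_bot fun M => ?_)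
    set ρ := min δ1 ε / 4 with hρdef
    have hmin : 0 < min δ1 ε := lt_min hδ10 hε
    have hρ0 : 0 < ρ := by rw [hρdef]; linarith
    have hρδ : 4 * ρ ≤ δ1 := by have := min_le_left δ1 ε; rw [hρdef]; linarith
    have hρε : 4 * ρ ≤ ε := by have := min_le_right δ1 ε; rw [hρdef]; linarith
    -- connector from near x to near xb
    obtain ⟨n, v, hv1, hv2⟩ : ∃ (n : ℕ) (v : X), dist v x < ρ ∧ dist (T^[n] v) xb < ρ := by
      obtain ⟨nn, w, hw⟩ := hT.transitive (Metric.ball xb ρ) (Metric.ball x ρ)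
        Metric.isOpen_ball Metric.isOpen_ball ⟨xb, Metric.mem_ball_self hρ0⟩
        ⟨x, Metric.mem_ball_self hρ0⟩
      exact ⟨nn, w, Metric.mem_ball.1 hw.2, Metric.mem_ball.1 hw.1⟩
    set s0 := ∑ j ∈ Finset.range n, (A (T^[j] v) - Abar) with hs0
    have hHρ : Filter.liminf (fun k : ℕ => birkhoffInf T A Abar ρ xb z k) Filter.atTop = ⊥ := by
      refine le_bot_iff.1 ?_
      rw [← hH]
      exact le_iSup (fun e : {e : ℝ // 0 < e} =>
        Filter.liminf (fun k : ℕ => birkhoffInf T A Abar e.1 xb z k) Filter.atTop) ⟨ρ, hρ0⟩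
    have h2 : Filter.liminf (fun k : ℕ => birkhoffInf T A Abar ρ xb z k) Filter.atTop
        < ((M - s0 - K * δ1 ^ θ : ℝ) : EReal) := by
      rw [hHρ]; exact EReal.bot_lt_coe _
    have hfreq := frequently_lt_of_liminf_lt (by isBoundedDefault) h2
    apply liminf_le_of_frequently_le'
    rw [frequently_atTop]
    intro N
    obtain ⟨k2, hk2N, hk2⟩ := frequently_atTop.1 hfreq N
    obtain ⟨z2, hz2b, hz2z, hz2sum⟩ := birkhoffInf_lt_iff.1 hk2
    have hsum2 : ∑ j ∈ Finset.range k2, (A (T^[j] z2) - Abar) < M - s0 - K * δ1 ^ θ :=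
      EReal.coe_lt_coe_iff.1 hz2sum
    have hdist : dist z2 (T^[n] v) < δ1 := by
      calc dist z2 (T^[n] v) ≤ dist z2 xb + dist xb (T^[n] v) := dist_triangle _ _ _
        _ < ρ + ρ := by rw [dist_comm xb]; exact add_lt_add hz2b hv2
        _ < δ1 := by linarith
    obtain ⟨w, hw1, hw2, hw3⟩ := concat_sum hlam0 hlam1 hθ0 hC0 hδ10 hHolder hlift
      v z2 n k2 hdist
    refine ⟨n + k2, by omega, ?_⟩
    have hwx : dist w x < ε := by
      have h6 : dist w v ≤ dist z2 (T^[n] v) := hw1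
      have h7 : dist z2 (T^[n] v) < 2 * ρ := by
        calc dist z2 (T^[n] v) ≤ dist z2 xb + dist xb (T^[n] v) := dist_triangle _ _ _
          _ < 2 * ρ := by rw [dist_comm xb]; linarith
      calc dist w x ≤ dist w v + dist v x := dist_triangle _ _ _
        _ < ε := by linarith
    have hwz : dist (T^[n + k2] w) z < ε := by
      rw [hw2]; exact lt_of_lt_of_le hz2z (by linarith)
    refine le_trans (birkhoffInf_le hwx hwz) (EReal.coe_le_coe_iff.2 ?_)
    have hKD : K * dist z2 (T^[n] v) ^ θ ≤ K * δ1 ^ θ :=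
      mul_le_mul_of_nonneg_left (Real.rpow_le_rpow dist_nonneg hdist.le hθ0.le) hK0
    rw [← hKdef, ← hs0] at hw3
    linarith
  by_cases hL : Filter.liminf (fun l : ℕ => manePotential T A Abar x (xl l)) Filter.atTop = ⊥
  · rw [hL, EReal.bot_add]
    refine le_of_eq (aux_ereal_eq_bot fun M => ?_)
    set ρ := min δ1 ε / 4 with hρdef
    have hmin : 0 < min δ1 ε := lt_min hδ10 hε
    have hρ0 : 0 < ρ := by rw [hρdef]; linarith
    have hρδ : 4 * ρ ≤ δ1 := by have := min_le_left δ1 ε; rw [hρdef]; linarith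
    have hρε : 4 * ρ ≤ ε := by have := min_le_right δ1 ε; rw [hρdef]; linarith
    -- connector from near xb to near z
    obtain ⟨n, v, hv1, hv2⟩ : ∃ (n : ℕ) (v : X), dist v xb < ρ ∧ dist (T^[n] v) z < ε := by
      obtain ⟨nn, w, hw⟩ := hT.transitive (Metric.ball z ε) (Metric.ball xb ρ)
        Metric.isOpen_ball Metric.isOpen_ball ⟨z, Metric.mem_ball_self hε⟩
        ⟨xb, Metric.mem_ball_self hρ0⟩
      exact ⟨nn, w, Metric.mem_ball.1 hw.2, Metric.mem_ball.1 hw.1⟩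
    set s0 := ∑ j ∈ Finset.range n, (A (T^[j] v) - Abar) with hs0
    apply liminf_le_of_frequently_le'
    rw [frequently_atTop]
    intro N
    set M2 := max (s0 + K * δ1 ^ θ - M) ((N : ℝ) * bnd) with hM2
    have hLlt : Filter.liminf (fun l : ℕ => manePotential T A Abar x (xl l)) Filter.atTop
        < ((-M2 : ℝ) : EReal) := by rw [hL]; exact EReal.bot_lt_coe _
    have hfreql := frequently_lt_of_liminf_lt (by isBoundedDefault) hLlt
    have hevl : ∀ᶠ l in Filter.atTop, dist (xl l) xb < ρ := by
      have := hxl.eventually_mem (Metric.ball_mem_nhds xb hρ0)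
      exact this.mono fun l hl => Metric.mem_ball.1 hl
    obtain ⟨l, hl1, hl2⟩ := (hfreql.and_eventually hevl).exists
    have h3 : (⨅ k : {n : ℕ // 1 ≤ n}, birkhoffInf T A Abar ρ x (xl l) k.1)
        < ((-M2 : ℝ) : EReal) :=
      lt_of_le_of_lt (le_iSup (fun e : {e : ℝ // 0 < e} =>
        ⨅ k : {n : ℕ // 1 ≤ n}, birkhoffInf T A Abar e.1 x (xl l) k.1) ⟨ρ, hρ0⟩) hl1
    obtain ⟨⟨k1, hk11⟩, hk1lt⟩ := iInf_lt_iff.1 h3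
    obtain ⟨z1, hz1x, hz1e, hz1sum⟩ := birkhoffInf_lt_iff.1 hk1lt
    have hsum1 : ∑ j ∈ Finset.range k1, (A (T^[j] z1) - Abar) < -M2 :=
      EReal.coe_lt_coe_iff.1 hz1sum
    have hdist : dist v (T^[k1] z1) < δ1 := by
      calc dist v (T^[k1] z1) ≤ dist v xb + dist xb (xl l) + dist (xl l) (T^[k1] z1) :=
            dist_triangle4 _ _ _ _
        _ < ρ + ρ + ρ := by
            rw [dist_comm xb (xl l), dist_comm (xl l) (T^[k1] z1)]
            linarith [hv1, hl2, hz1e]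
        _ < δ1 := by linarith
    obtain ⟨w, hw1, hw2, hw3⟩ := concat_sum hlam0 hlam1 hθ0 hC0 hδ10 hHolder hlift
      z1 v k1 n hdist
    have hk1N : N < k1 := by
      have hb1 : |∑ j ∈ Finset.range k1, (A (T^[j] z1) - Abar)| ≤ k1 * bnd := hsum_bd _ _
      have hb2 : (N : ℝ) * bnd ≤ M2 := le_max_right _ _
      have hb3 : -(∑ j ∈ Finset.range k1, (A (T^[j] z1) - Abar)) ≤ k1 * bnd := by
        have := neg_abs_le (∑ j ∈ Finset.range k1, (A (T^[j] z1) - Abar)); linarith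
      have : (N : ℝ) < (k1 : ℝ) := by nlinarith
      exact_mod_cast this
    refine ⟨k1 + n, by omega, ?_⟩
    have hwx : dist w x < ε := by
      have h6 : dist w z1 ≤ dist v (T^[k1] z1) := hw1
      have h7 : dist v (T^[k1] z1) < 3 * ρ := by
        calc dist v (T^[k1] z1) ≤ dist v xb + dist xb (xl l) + dist (xl l) (T^[k1] z1) :=
              dist_triangle4 _ _ _ _
          _ < 3 * ρ := by
              rw [dist_comm xb (xl l), dist_comm (xl l) (T^[k1] z1)]
              linarith [hv1, hl2, hz1e]
      calc dist w x ≤ dist w z1 + dist z1 x := dist_triangle _ _ _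
        _ < ε := by linarith
    have hwz : dist (T^[k1 + n] w) z < ε := by rw [hw2]; exact hv2
    refine le_trans (birkhoffInf_le hwx hwz) (EReal.coe_le_coe_iff.2 ?_)
    have hKD : K * dist v (T^[k1] z1) ^ θ ≤ K * δ1 ^ θ :=
      mul_le_mul_of_nonneg_left (Real.rpow_le_rpow dist_nonneg hdist.le hθ0.le) hK0
    rw [← hKdef] at hw3
    have hM2a : s0 + K * δ1 ^ θ - M ≤ M2 := le_max_left _ _
    rw [← hs0] at hw3
    linarith
  by_cases hLT : Filter.liminf (fun l : ℕ => manePotential T A Abar x (xl l)) Filter.atTop = ⊤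
  · rw [hLT, EReal.top_add_of_ne_bot hH]; exact le_top
  by_cases hHT : peierlsBarrier T A Abar xb z = ⊤
  · rw [hHT, EReal.add_top_of_ne_bot hL]; exact le_top
  obtain ⟨l0, hl0⟩ := aux_ereal_cases _ hLT hL
  obtain ⟨h0, hh0⟩ := aux_ereal_cases _ hHT hH
  rw [hl0, hh0, ← EReal.coe_add]
  refine aux_ereal_le_coe fun η hη => ?_
  have hK1 : 0 < K + 1 := by linarith
  have hρ00 : (0:ℝ) < (η/3/(K+1)) ^ θ⁻¹ / 3 := by positivity
  set ρ := min (min δ1 ε / 4) ((η/3/(K+1)) ^ θ⁻¹ / 3) with hρdef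
  have hmin : 0 < min δ1 ε := lt_min hδ10 hε
  have hρ0 : 0 < ρ := lt_min (by linarith) hρ00
  have hρδ : 4 * ρ ≤ δ1 := by
    have h1 := min_le_left (min δ1 ε / 4) ((η/3/(K+1)) ^ θ⁻¹ / 3)
    have h2 := min_le_left δ1 ε
    rw [hρdef]; linarith
  have hρε : 4 * ρ ≤ ε := by
    have h1 := min_le_left (min δ1 ε / 4) ((η/3/(K+1)) ^ θ⁻¹ / 3)
    have h2 := min_le_right δ1 ε
    rw [hρdef]; linarith
  have hρη : K * (3 * ρ) ^ θ ≤ η / 3 := by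
    have ha0 : (0:ℝ) < η/3/(K+1) := by positivity
    have he1 : ((η/3/(K+1)) ^ θ⁻¹) ^ θ = η/3/(K+1) := by
      rw [← Real.rpow_mul ha0.le, inv_mul_cancel₀ hθ0.ne', Real.rpow_one]
    have h3ρ : 3 * ρ ≤ (η/3/(K+1)) ^ θ⁻¹ := by
      have := min_le_right (min δ1 ε / 4) ((η/3/(K+1)) ^ θ⁻¹ / 3)
      rw [hρdef]; linarith
    have he2 : (3 * ρ) ^ θ ≤ η/3/(K+1) := by
      rw [← he1]; exact Real.rpow_le_rpow (by positivity) h3ρ hθ0.le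
    have h4 := mul_le_mul_of_nonneg_left he2 hK0
    have h5 : K * (η/3/(K+1)) ≤ η/3 := by
      have hq2 : K/(K+1) ≤ 1 := (div_le_one hK1).2 (by linarith)
      have hq3 : (0:ℝ) ≤ η/3 := by linarith
      calc K * (η/3/(K+1)) = (η/3) * (K/(K+1)) := by ring
        _ ≤ (η/3) * 1 := mul_le_mul_of_nonneg_left hq2 hq3
        _ = η/3 := mul_one _
    linarith
  have hfreql : ∃ᶠ l in Filter.atTop,
      manePotential T A Abar x (xl l) < ((l0 + η/3 : ℝ) : EReal) := by
    refine frequently_lt_of_liminf_lt (by isBoundedDefault) ?_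
    rw [hl0]; exact EReal.coe_lt_coe_iff.2 (by linarith)
  have hevl : ∀ᶠ l in Filter.atTop, dist (xl l) xb < ρ := by
    have := hxl.eventually_mem (Metric.ball_mem_nhds xb hρ0)
    exact this.mono fun l hl => Metric.mem_ball.1 hl
  obtain ⟨l, hl1, hl2⟩ := (hfreql.and_eventually hevl).exists
  have h3 : (⨅ k : {n : ℕ // 1 ≤ n}, birkhoffInf T A Abar ρ x (xl l) k.1)
      < ((l0 + η/3 : ℝ) : EReal) :=
    lt_of_le_of_lt (le_iSup (fun e : {e : ℝ // 0 < e} =>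
      ⨅ k : {n : ℕ // 1 ≤ n}, birkhoffInf T A Abar e.1 x (xl l) k.1) ⟨ρ, hρ0⟩) hl1
  obtain ⟨⟨k1, hk11⟩, hk1lt⟩ := iInf_lt_iff.1 h3
  obtain ⟨z1, hz1x, hz1e, hz1sum⟩ := birkhoffInf_lt_iff.1 hk1lt
  have hsum1 : ∑ j ∈ Finset.range k1, (A (T^[j] z1) - Abar) < l0 + η/3 :=
    EReal.coe_lt_coe_iff.1 hz1sum
  have hfreqk : ∃ᶠ k in Filter.atTop,
      birkhoffInf T A Abar ρ xb z k < ((h0 + η/3 : ℝ) : EReal) := by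
    refine frequently_lt_of_liminf_lt (by isBoundedDefault) ?_
    refine lt_of_le_of_lt (le_trans (le_iSup (fun e : {e : ℝ // 0 < e} =>
      Filter.liminf (fun k : ℕ => birkhoffInf T A Abar e.1 xb z k) Filter.atTop)
      ⟨ρ, hρ0⟩) hh0.le) ?_
    exact EReal.coe_lt_coe_iff.2 (by linarith)
  apply liminf_le_of_frequently_le'
  rw [frequently_atTop]
  intro N
  obtain ⟨k2, hk2N, hk2⟩ := frequently_atTop.1 hfreqk N
  obtain ⟨z2, hz2b, hz2z, hz2sum⟩ := birkhoffInf_lt_iff.1 hk2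
  have hsum2 : ∑ j ∈ Finset.range k2, (A (T^[j] z2) - Abar) < h0 + η/3 :=
    EReal.coe_lt_coe_iff.1 hz2sum
  have hd3 : dist z2 (T^[k1] z1) < 3 * ρ := by
    calc dist z2 (T^[k1] z1) ≤ dist z2 xb + dist xb (xl l) + dist (xl l) (T^[k1] z1) :=
          dist_triangle4 _ _ _ _
      _ < 3 * ρ := by
          rw [dist_comm xb (xl l), dist_comm (xl l) (T^[k1] z1)]
          linarith [hz2b, hl2, hz1e]
  have hdist : dist z2 (T^[k1] z1) < δ1 := by linarith
  obtain ⟨w, hw1, hw2, hw3⟩ := concat_sum hlam0 hlam1 hθ0 hC0 hδ10 hHolder hlift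
    z1 z2 k1 k2 hdist
  refine ⟨k1 + k2, by omega, ?_⟩
  have hwx : dist w x < ε := by
    calc dist w x ≤ dist w z1 + dist z1 x := dist_triangle _ _ _
      _ < ε := by
          have := le_trans hw1 hd3.le
          linarith
  have hwz : dist (T^[k1 + k2] w) z < ε := by
    rw [hw2]; exact lt_of_lt_of_le hz2z (by linarith)
  refine le_trans (birkhoffInf_le hwx hwz) (EReal.coe_le_coe_iff.2 ?_)
  have hKD : K * dist z2 (T^[k1] z1) ^ θ ≤ K * (3 * ρ) ^ θ :=
    mul_le_mul_of_nonneg_left (Real.rpow_le_rpow dist_nonneg hd3.le hθ0.le) hK0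
  rw [← hKdef] at hw3
  linarith

/-- `h_A(x, z) ≤ liminf_l φ_A(x, x̄_l) + h_A(x̄, z)` for any
sequence `x̄_l → x̄`; in particular `h_A(x, z) ≤ φ_A(x, y) + h_A(y, z)` and
`h_A` satisfies the triangle inequality. -/
theorem peierls_liminf_triangle {X : Type*} [MetricSpace X] [CompactSpace X] [Nonempty X]
    [MeasurableSpace X] [BorelSpace X]
    (T : X → X) (hT : IsExpandingTransitive T)
    (θ : ℝ) (hθ0 : 0 < θ) (hθ1 : θ ≤ 1)
    (A : X → ℝ) (hA : IsThetaHolder θ A)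
    (Abar : ℝ) (hAbar : IsErgMinValue T A Abar) :
    (∀ x xb z : X, ∀ xl : ℕ → X, Filter.Tendsto xl Filter.atTop (nhds xb) →
      peierlsBarrier T A Abar x z ≤
        Filter.liminf (fun l : ℕ => manePotential T A Abar x (xl l)) Filter.atTop +
          peierlsBarrier T A Abar xb z) ∧
    (∀ x y z : X, peierlsBarrier T A Abar x z ≤
      manePotential T A Abar x y + peierlsBarrier T A Abar y z) ∧
    (∀ x y z : X, peierlsBarrier T A Abar x z ≤
      peierlsBarrier T A Abar x y + peierlsBarrier T A Abar y z) := by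
  have main := fun x xb z xl hxl => central hT hθ0 hA Abar x xb z xl hxl
  refine ⟨main, ?_, ?_⟩
  · intro x y z
    have h := main x y z (fun _ => y) tendsto_const_nhds
    rwa [liminf_const] at h
  · intro x y z
    have h := main x y z (fun _ => y) tendsto_const_nhds
    rw [liminf_const] at h
    exact le_trans h (add_le_add_left (phi_le_peierls T A Abar x y) _)
end

section
/- Let A : X → ℝ be θ-Hölder for some θ ∈ (0,1]. For every x ∈ X the following are equivalent: (i) x ∈ Ω(A); (ii) φ_A(x, x) = 0; (iii) h_A(x, x) = 0. -/
open MeasureTheory Filter Topology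

set_option maxHeartbeats 1600000


section AuxA
variable {X : Type*} [MetricSpace X]

/-- Backward contraction along orbits that stay `δ`-close. -/
lemma iter_contract (T : X → X) {lam δ : ℝ} (hlam0 : 0 ≤ lam)
    (hc : ∀ x y : X, dist x y ≤ δ → dist x y ≤ lam * dist (T x) (T y)) :
    ∀ (n : ℕ) (a b : X), (∀ t, t ≤ n → dist (T^[t] a) (T^[t] b) ≤ δ) →
      dist a b ≤ lam ^ n * dist (T^[n] a) (T^[n] b) := by
  intro n
  induction n with
  | zero => intro a b _; simp
  | succ n ih =>
    intro a b h
    have h0 : dist a b ≤ δ := by simpa using h 0 (by omega)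
    have h1 := hc a b h0
    have h2 : dist (T a) (T b) ≤ lam ^ n * dist (T^[n] (T a)) (T^[n] (T b)) := by
      apply ih
      intro t ht
      simpa [Function.iterate_succ_apply] using h (t + 1) (by omega)
    have h3 : lam * dist (T a) (T b) ≤ lam * (lam ^ n * dist (T^[n] (T a)) (T^[n] (T b))) :=
      mul_le_mul_of_nonneg_left h2 hlam0
    calc dist a b ≤ lam * dist (T a) (T b) := h1
      _ ≤ lam * (lam ^ n * dist (T^[n] (T a)) (T^[n] (T b))) := h3
      _ = lam ^ (n + 1) * dist (T^[n + 1] a) (T^[n + 1] b) := by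
          rw [Function.iterate_succ_apply, Function.iterate_succ_apply, pow_succ]
          ring

/-- Uniform local surjectivity for a continuous open map on a compact space. -/
lemma uniform_open [CompactSpace X] [Nonempty X] {T : X → X} (hcT : Continuous T)
    (ho : IsOpenMap T) {δ : ℝ} (hδ : 0 < δ) :
    ∃ ρ : ℝ, 0 < ρ ∧ ∀ x : X, Metric.ball (T x) ρ ⊆ T '' Metric.ball x (δ / 2) := by
  have h1 : ∀ x : X, ∃ ρx : ℝ, 0 < ρx ∧ Metric.ball (T x) ρx ⊆ T '' Metric.ball x (δ / 4) := by
    intro x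
    have hopen : IsOpen (T '' Metric.ball x (δ / 4)) := ho _ Metric.isOpen_ball
    have hmem : T x ∈ T '' Metric.ball x (δ / 4) :=
      ⟨x, Metric.mem_ball_self (by linarith), rfl⟩
    exact Metric.isOpen_iff.1 hopen _ hmem
  choose ρx hρx hball using h1
  have h2 : ∀ x : X, ∃ rx : ℝ, 0 < rx ∧ rx ≤ δ / 4 ∧
      ∀ x' : X, dist x' x < rx → dist (T x') (T x) < ρx x / 2 := by
    intro x
    have := Metric.continuous_iff.1 hcT x (ρx x / 2) (by linarith [hρx x])
    obtain ⟨r, hr0, hr⟩ := this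
    exact ⟨min r (δ / 4), by positivity, min_le_right _ _,
      fun x' hx' => hr x' (lt_of_lt_of_le hx' (min_le_left _ _))⟩
  choose rx hrx0 hrx1 hrx2 using h2
  obtain ⟨s, hs⟩ := isCompact_univ.elim_finite_subcover (fun x => Metric.ball x (rx x))
    (fun x => Metric.isOpen_ball) (by
      intro x _
      exact Set.mem_iUnion.2 ⟨x, Metric.mem_ball_self (hrx0 x)⟩)
  have hsne : s.Nonempty := by
    by_contra h
    rw [Finset.not_nonempty_iff_eq_empty] at h
    obtain ⟨x⟩ := (inferInstance : Nonempty X)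
    have := hs (Set.mem_univ x)
    simp [h] at this
  refine ⟨s.inf' hsne (fun i => ρx i / 2), ?_, ?_⟩
  · rw [Finset.lt_inf'_iff]
    intro i _
    linarith [hρx i]
  · intro x y hy
    have hx := hs (Set.mem_univ x)
    rw [Set.mem_iUnion₂] at hx
    obtain ⟨i, his, hxi⟩ := hx
    have hρi : s.inf' hsne (fun i => ρx i / 2) ≤ ρx i / 2 := Finset.inf'_le _ his
    have hxi' : dist x i < rx i := by simpa [Metric.mem_ball] using hxi
    have hTxi : dist (T x) (T i) < ρx i / 2 := hrx2 i x hxi'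
    have hyi : y ∈ Metric.ball (T i) (ρx i) := by
      rw [Metric.mem_ball] at hy ⊢
      calc dist y (T i) ≤ dist y (T x) + dist (T x) (T i) := dist_triangle _ _ _
        _ < s.inf' hsne (fun i => ρx i / 2) + ρx i / 2 := by linarith
        _ ≤ ρx i / 2 + ρx i / 2 := by linarith
        _ = ρx i := by ring
    obtain ⟨w, hw, hTw⟩ := hball i hyi
    refine ⟨w, ?_, hTw⟩
    rw [Metric.mem_ball] at hw ⊢
    calc dist w x ≤ dist w i + dist i x := dist_triangle _ _ _
      _ < δ / 4 + rx i := by rw [dist_comm i x]; linarith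
      _ ≤ δ / 4 + δ / 4 := by linarith [hrx1 i]
      _ = δ / 2 := by ring

end AuxA

section AuxB
variable {X : Type*} [MetricSpace X]
variable {T : X → X} {lam δ ρ : ℝ}

/-- One-step inverse branch. -/
lemma pullback_one (hρ : ∀ x : X, Metric.ball (T x) ρ ⊆ T '' Metric.ball x (δ / 2))
    (hc : ∀ x y : X, dist x y ≤ δ → dist x y ≤ lam * dist (T x) (T y)) (hδ : 0 < δ) :
    ∀ x w : X, dist w (T x) < ρ → ∃ y, T y = w ∧ dist y x ≤ lam * dist w (T x) := by
  intro x w hw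
  obtain ⟨y, hy, hTy⟩ := hρ x (Metric.mem_ball.2 hw)
  refine ⟨y, hTy, ?_⟩
  have hyx : dist y x ≤ δ := by
    have := Metric.mem_ball.1 hy
    linarith
  have := hc y x hyx
  rwa [hTy] at this

/-- `k`-step inverse branch along an orbit. -/
lemma pullback_iter (hρ : ∀ x : X, Metric.ball (T x) ρ ⊆ T '' Metric.ball x (δ / 2))
    (hc : ∀ x y : X, dist x y ≤ δ → dist x y ≤ lam * dist (T x) (T y))
    (hδ : 0 < δ) (hlam0 : 0 ≤ lam) (hlam1 : lam < 1) :
    ∀ (k : ℕ) (x w : X), dist w (T^[k] x) < ρ → ∃ y, T^[k] y = w ∧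
      ∀ j, j ≤ k → dist (T^[j] y) (T^[j] x) ≤ lam ^ (k - j) * dist w (T^[k] x) := by
  intro k
  induction k with
  | zero =>
    intro x w h
    refine ⟨w, rfl, fun j hj => ?_⟩
    interval_cases j
    simp
  | succ k ih =>
    intro x w h
    rw [Function.iterate_succ_apply'] at h
    obtain ⟨y1, hy1, hd1⟩ := pullback_one hρ hc hδ (T^[k] x) w h
    have hd1' : dist y1 (T^[k] x) < ρ := by
      have h1 : lam * dist w (T (T^[k] x)) ≤ dist w (T (T^[k] x)) := by
        nlinarith [dist_nonneg (x := w) (y := T (T^[k] x))]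
      linarith
    obtain ⟨y, hy, hdy⟩ := ih x y1 hd1'
    refine ⟨y, by rw [Function.iterate_succ_apply', hy, hy1], ?_⟩
    intro j hj
    rcases Nat.lt_or_ge j (k + 1) with hjk | hjk
    · have hjk' : j ≤ k := by omega
      have e1 : dist (T^[j] y) (T^[j] x) ≤ lam ^ (k - j) * dist y1 (T^[k] x) := hdy j hjk'
      have e2 : lam ^ (k - j) * dist y1 (T^[k] x) ≤
          lam ^ (k - j) * (lam * dist w (T (T^[k] x))) :=
        mul_le_mul_of_nonneg_left hd1 (pow_nonneg hlam0 _)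
      have e3 : lam ^ (k - j) * (lam * dist w (T (T^[k] x))) =
          lam ^ (k + 1 - j) * dist w (T^[k+1] x) := by
        rw [Function.iterate_succ_apply']
        have : k + 1 - j = (k - j) + 1 := by omega
        rw [this, pow_succ]
        ring
      calc dist (T^[j] y) (T^[j] x) ≤ lam ^ (k - j) * dist y1 (T^[k] x) := e1
        _ ≤ lam ^ (k - j) * (lam * dist w (T (T^[k] x))) := e2
        _ = lam ^ (k + 1 - j) * dist w (T^[k+1] x) := e3
    · have hj' : j = k + 1 := by omega
      subst hj'
      have : T^[k+1] y = w := by rw [Function.iterate_succ_apply', hy, hy1]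
      rw [this]
      have : k + 1 - (k + 1) = 0 := by omega
      rw [this, pow_zero, one_mul, Function.iterate_succ_apply']

/-- Multi-loop shadowing: pulling back `m` times around a near-periodic loop. -/
lemma multiloop (hρ : ∀ x : X, Metric.ball (T x) ρ ⊆ T '' Metric.ball x (δ / 2))
    (hc : ∀ x y : X, dist x y ≤ δ → dist x y ≤ lam * dist (T x) (T y))
    (hδ : 0 < δ) (hlam0 : 0 < lam) (hlam1 : lam < 1)
    {z : X} {k : ℕ} (hk : 1 ≤ k) {B : ℝ} (hB0 : 0 ≤ B)
    (hD : dist (T^[k] z) z < (1 - lam) * B) (hBρ : B ≤ ρ) :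
    ∀ m : ℕ, ∃ w, T^[m * k] w = z ∧
      ∀ i, i < m → ∀ j, j ≤ k → dist (T^[i * k + j] w) (T^[j] z) ≤ lam ^ (k - j) * B := by
  intro m
  induction m with
  | zero => exact ⟨z, by simp, fun i hi => by omega⟩
  | succ m ih =>
    obtain ⟨w, hw, hest⟩ := ih
    have hwz : dist w z ≤ lam ^ k * B := by
      rcases Nat.eq_zero_or_pos m with hm | hm
      · subst hm
        simp only [Nat.zero_mul, Function.iterate_zero, id_eq] at hw
        rw [hw]
        simp
        positivity
      · have := hest 0 hm 0 (by omega)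
        simpa using this
    have hwTk : dist w (T^[k] z) < ρ := by
      have h1 : dist w (T^[k] z) ≤ dist w z + dist z (T^[k] z) := dist_triangle _ _ _
      have h2 : dist z (T^[k] z) < (1 - lam) * B := by rwa [dist_comm] at hD
      have h3 : lam ^ k ≤ lam := by
        calc lam ^ k ≤ lam ^ 1 := pow_le_pow_of_le_one hlam0.le hlam1.le hk
          _ = lam := pow_one lam
      have h4 : lam ^ k * B ≤ lam * B := mul_le_mul_of_nonneg_right h3 hB0
      have : dist w (T^[k] z) < lam * B + (1 - lam) * B := by linarith
      calc dist w (T^[k] z) < lam * B + (1 - lam) * B := this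
        _ = B := by ring
        _ ≤ ρ := hBρ
    obtain ⟨y, hy, hdy⟩ := pullback_iter hρ hc hδ hlam0.le hlam1 k z w hwTk
    have hdB : dist w (T^[k] z) ≤ B := by
      have := hwTk
      have h2 : dist z (T^[k] z) < (1 - lam) * B := by rwa [dist_comm] at hD
      have h3 : lam ^ k ≤ lam := by
        calc lam ^ k ≤ lam ^ 1 := pow_le_pow_of_le_one hlam0.le hlam1.le hk
          _ = lam := pow_one lam
      have h4 : lam ^ k * B ≤ lam * B := mul_le_mul_of_nonneg_right h3 hB0
      have h1 : dist w (T^[k] z) ≤ dist w z + dist z (T^[k] z) := dist_triangle _ _ _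
      nlinarith
    refine ⟨y, ?_, ?_⟩
    · have hmk : (m + 1) * k = m * k + k := by ring
      rw [hmk, Function.iterate_add_apply, hy, hw]
    · intro i hi j hj
      rcases Nat.eq_zero_or_pos i with hi0 | hi0
      · subst hi0
        simp only [Nat.zero_mul, Nat.zero_add]
        calc dist (T^[j] y) (T^[j] z) ≤ lam ^ (k - j) * dist w (T^[k] z) := hdy j hj
          _ ≤ lam ^ (k - j) * B := mul_le_mul_of_nonneg_left hdB (pow_nonneg hlam0.le _)
      · obtain ⟨i', rfl⟩ : ∃ i', i = i' + 1 := ⟨i - 1, by omega⟩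
        have harith : (i' + 1) * k + j = (i' * k + j) + k := by ring
        rw [harith, Function.iterate_add_apply, hy]
        exact hest i' (by omega) j hj

end AuxB

section AuxC
variable {X : Type*} [MetricSpace X]
variable {T : X → X} {lam δ ρ : ℝ}

lemma periodic_point [CompactSpace X]
    (hρ : ∀ x : X, Metric.ball (T x) ρ ⊆ T '' Metric.ball x (δ / 2))
    (hc : ∀ x y : X, dist x y ≤ δ → dist x y ≤ lam * dist (T x) (T y))
    (hδ : 0 < δ) (hlam0 : 0 < lam) (hlam1 : lam < 1) (hcT : Continuous T)
    (hδρ : 2 * ρ ≤ δ)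
    {z : X} {k : ℕ} (hk : 1 ≤ k) {B : ℝ} (hB0 : 0 ≤ B)
    (hD : dist (T^[k] z) z < (1 - lam) * B) (hBρ : B ≤ ρ) :
    ∃ p, T^[k] p = p ∧ ∀ j, j ≤ k → dist (T^[j] p) (T^[j] z) ≤ lam ^ (k - j) * B := by
  have hml := multiloop hρ hc hδ hlam0 hlam1 hk hB0 hD hBρ
  set v : ℕ → X := fun m => (hml m).choose with hv
  have hv1 : ∀ m, T^[m * k] (v m) = z := fun m => (hml m).choose_spec.1
  have hv2 : ∀ m, ∀ i, i < m → ∀ j, j ≤ k →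
      dist (T^[i * k + j] (v m)) (T^[j] z) ≤ lam ^ (k - j) * B :=
    fun m => (hml m).choose_spec.2
  -- orbit of `v m` stays `B`-close to the looped orbit of `z`
  have horb : ∀ m t, t < m * k → dist (T^[t] (v m)) (T^[t % k] z) ≤ B := by
    intro m t ht
    have hk0 : 0 < k := hk
    have hi : t / k < m := Nat.div_lt_of_lt_mul (by rwa [mul_comm] at ht)
    have hidx : (t / k) * k + t % k = t := by
      rw [mul_comm]
      exact Nat.div_add_mod t k
    have := hv2 m (t / k) hi (t % k) (le_of_lt (Nat.mod_lt t hk0))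
    rw [hidx] at this
    calc dist (T^[t] (v m)) (T^[t % k] z) ≤ lam ^ (k - t % k) * B := this
      _ ≤ 1 * B := mul_le_mul_of_nonneg_right (pow_le_one₀ hlam0.le hlam1.le) hB0
      _ = B := one_mul B
  have hBδ : 2 * B ≤ δ := by linarith
  -- consecutive approximants are related by `T^[k]`
  have keyA : ∀ m, T^[k] (v (m + 1)) = v m := by
    intro m
    have hcon := iter_contract T hlam0.le hc (m * k) (T^[k] (v (m + 1))) (v m) ?_
    · have e1 : T^[m * k] (T^[k] (v (m + 1))) = z := by
        rw [← Function.iterate_add_apply]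
        have : m * k + k = (m + 1) * k := by ring
        rw [this]
        exact hv1 (m + 1)
      rw [e1, hv1 m, dist_self, mul_zero] at hcon
      exact eq_of_dist_eq_zero (le_antisymm hcon dist_nonneg)
    · intro t ht
      rcases eq_or_lt_of_le ht with h | h
      · have e1 : T^[t] (T^[k] (v (m + 1))) = z := by
          rw [← Function.iterate_add_apply]
          have : t + k = (m + 1) * k := by rw [h]; ring
          rw [this]
          exact hv1 (m + 1)
        rw [e1, h, hv1 m, dist_self]
        linarith
      · have e2 : dist (T^[t] (v m)) (T^[t % k] z) ≤ B := horb m t h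
        have e1 : dist (T^[t] (T^[k] (v (m + 1)))) (T^[t % k] z) ≤ B := by
          rw [← Function.iterate_add_apply]
          have hexp : (m + 1) * k = m * k + k := by ring
          have ht1 : t + k < (m + 1) * k := by omega
          have := horb (m + 1) (t + k) ht1
          rwa [Nat.add_mod_right] at this
        calc dist (T^[t] (T^[k] (v (m + 1)))) (T^[t] (v m))
            ≤ dist (T^[t] (T^[k] (v (m + 1)))) (T^[t % k] z)
              + dist (T^[t % k] z) (T^[t] (v m)) := dist_triangle _ _ _
          _ ≤ B + B := by rw [dist_comm (T^[t % k] z)]; exact add_le_add e1 e2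
          _ ≤ δ := by linarith
  -- geometric Cauchy estimate
  have keyB : ∀ m, dist (v m) (v (m + 1)) ≤ B * lam ^ m := by
    intro m
    have hcon := iter_contract T hlam0.le hc (m * k) (v (m + 1)) (v m) ?_
    · have e1 : dist (T^[m * k] (v (m + 1))) (T^[m * k] (v m)) ≤ lam ^ k * B := by
        rw [hv1 m]
        have := hv2 (m + 1) m (by omega) 0 (by omega)
        simpa using this
      have e2 : dist (v (m + 1)) (v m) ≤ lam ^ (m * k) * (lam ^ k * B) := by
        calc dist (v (m + 1)) (v m)
            ≤ lam ^ (m * k) * dist (T^[m * k] (v (m + 1))) (T^[m * k] (v m)) := hcon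
          _ ≤ lam ^ (m * k) * (lam ^ k * B) :=
              mul_le_mul_of_nonneg_left e1 (pow_nonneg hlam0.le _)
      rw [dist_comm]
      have h5 : lam ^ (m * k) ≤ lam ^ m :=
        pow_le_pow_of_le_one hlam0.le hlam1.le (Nat.le_mul_of_pos_right m hk)
      have h6 : lam ^ k ≤ 1 := pow_le_one₀ hlam0.le hlam1.le
      calc dist (v (m + 1)) (v m) ≤ lam ^ (m * k) * (lam ^ k * B) := e2
        _ ≤ lam ^ m * (1 * B) := by
            apply mul_le_mul h5 (mul_le_mul_of_nonneg_right h6 hB0)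
              (by positivity) (by positivity)
        _ = B * lam ^ m := by ring
    · intro t ht
      rcases eq_or_lt_of_le ht with h | h
      · have hexp : (m + 1) * k = m * k + k := by ring
        have e1 : dist (T^[t] (v (m + 1))) (T^[t % k] z) ≤ B := by
          have ht1 : t < (m + 1) * k := by omega
          exact horb (m + 1) t ht1
        have hmod : t % k = 0 := by rw [h]; exact Nat.mul_mod_left m k
        rw [hmod] at e1
        simp only [Function.iterate_zero, id_eq] at e1
        rw [h, hv1 m]
        calc dist (T^[m*k] (v (m + 1))) z ≤ B := by rw [← h]; exact e1
          _ ≤ δ := by linarith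
      · have hexp : (m + 1) * k = m * k + k := by ring
        have e1 : dist (T^[t] (v (m + 1))) (T^[t % k] z) ≤ B :=
          horb (m + 1) t (by omega)
        have e2 : dist (T^[t] (v m)) (T^[t % k] z) ≤ B := horb m t h
        calc dist (T^[t] (v (m + 1))) (T^[t] (v m))
            ≤ dist (T^[t] (v (m + 1))) (T^[t % k] z)
              + dist (T^[t % k] z) (T^[t] (v m)) := dist_triangle _ _ _
          _ ≤ B + B := by rw [dist_comm (T^[t % k] z)]; exact add_le_add e1 e2
          _ ≤ δ := by linarith
  have hcauchy : CauchySeq v := cauchySeq_of_le_geometric lam B hlam1 keyB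
  obtain ⟨p, hp⟩ := cauchySeq_tendsto_of_complete hcauchy
  have hpsucc : Tendsto (fun m => v (m + 1)) atTop (𝓝 p) :=
    hp.comp (tendsto_add_atTop_nat 1)
  refine ⟨p, ?_, ?_⟩
  · have h1 : Tendsto (fun m => T^[k] (v (m + 1))) atTop (𝓝 (T^[k] p)) :=
      ((hcT.iterate k).tendsto p).comp hpsucc
    have h2 : (fun m => T^[k] (v (m + 1))) = v := funext keyA
    rw [h2] at h1
    exact tendsto_nhds_unique h1 hp
  · intro j hj
    have h1 : Tendsto (fun m => dist (T^[j] (v (m + 1))) (T^[j] z)) atTop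
        (𝓝 (dist (T^[j] p) (T^[j] z))) :=
      (Continuous.dist ((hcT.iterate j).comp continuous_id) continuous_const).continuousAt.tendsto.comp
        hpsucc |>.congr (fun m => rfl)
    apply le_of_tendsto h1
    filter_upwards with m
    have := hv2 (m + 1) 0 (by omega) j hj
    simpa using this

end AuxC

lemma sum_range_shift {M : Type*} [AddCommMonoid M] (F : ℕ → M) (k : ℕ) (h : F k = F 0) :
    ∑ j ∈ Finset.range k, F (j + 1) = ∑ j ∈ Finset.range k, F j := by
  cases k with
  | zero => simp
  | succ n =>
    rw [Finset.sum_range_succ (fun j => F (j + 1)), h, Finset.sum_range_succ' F]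

section AuxD
open scoped ENNReal
variable {X : Type*} [MetricSpace X]


lemma map_finset_sum_meas {α β : Type*} [MeasurableSpace α] [MeasurableSpace β]
    {g : α → β} (hg : Measurable g) {ι : Type*} (s : Finset ι) (μ : ι → Measure α) :
    (∑ i ∈ s, μ i).map g = ∑ i ∈ s, (μ i).map g := by
  classical
  induction s using Finset.induction_on with
  | empty => simp
  | @insert a s hnotmem ih =>
    rw [Finset.sum_insert hnotmem, Finset.sum_insert hnotmem,
      MeasureTheory.Measure.map_add _ _ hg, ih]

lemma periodic_nonneg [CompactSpace X] [MeasurableSpace X] [BorelSpace X]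
    {T : X → X} {A : X → ℝ} {Abar : ℝ}
    (hcT : Continuous T) (hcA : Continuous A)
    (hAbar : IsErgMinValue T A Abar)
    {p : X} {k : ℕ} (hk : 1 ≤ k) (hp : T^[k] p = p) :
    0 ≤ ∑ j ∈ Finset.range k, (A (T^[j] p) - Abar) := by
  have hk0 : (k : ℝ≥0∞) ≠ 0 := by exact_mod_cast Nat.one_le_iff_ne_zero.mp hk
  have hprob : IsProbabilityMeasure
      (((k : ℝ≥0∞))⁻¹ • ∑ j ∈ Finset.range k, Measure.dirac (T^[j] p)) := by
    constructor
    rw [Measure.smul_apply, Measure.coe_finset_sum]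
    simp only [Finset.sum_apply, Measure.dirac_apply_of_mem (Set.mem_univ _)]
    rw [Finset.sum_const, Finset.card_range, nsmul_eq_mul, mul_one, smul_eq_mul]
    exact ENNReal.inv_mul_cancel hk0 (ENNReal.natCast_ne_top k)
  have hint : ∀ j : X, Integrable A (Measure.dirac j) := by
    intro j
    refine ⟨hcA.aestronglyMeasurable, ?_⟩
    rw [HasFiniteIntegral, MeasureTheory.lintegral_dirac]
    exact ENNReal.coe_lt_top
  have hsum : (∑ j ∈ Finset.range k, Measure.dirac (T^[j] p)).map T
      = ∑ j ∈ Finset.range k, Measure.dirac (T^[j] p) := by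
    rw [map_finset_sum_meas hcT.measurable]
    have h1 : ∀ j ∈ Finset.range k,
        (Measure.dirac (T^[j] p)).map T = Measure.dirac (T^[j + 1] p) := by
      intro j _
      rw [Measure.map_dirac' hcT.measurable, Function.iterate_succ_apply']
    rw [Finset.sum_congr rfl h1]
    refine sum_range_shift (fun j => Measure.dirac (T^[j] p)) k ?_
    simp only [hp, Function.iterate_zero, id_eq]
  have hmp : MeasurePreserving T
      (((k : ℝ≥0∞))⁻¹ • ∑ j ∈ Finset.range k, Measure.dirac (T^[j] p))
      (((k : ℝ≥0∞))⁻¹ • ∑ j ∈ Finset.range k, Measure.dirac (T^[j] p)) := by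
    refine ⟨hcT.measurable, ?_⟩
    rw [Measure.map_smul, hsum]
  have hintegral : ∫ x, A x ∂(((k : ℝ≥0∞))⁻¹ • ∑ j ∈ Finset.range k, Measure.dirac (T^[j] p))
      = (k : ℝ)⁻¹ * ∑ j ∈ Finset.range k, A (T^[j] p) := by
    rw [integral_smul_measure, integral_finset_sum_measure (fun j _ => hint _)]
    simp only [integral_dirac]
    rw [ENNReal.toReal_inv]
    simp [smul_eq_mul]
  have hlow := hAbar.2 _ hprob hmp
  rw [hintegral] at hlow
  have hkpos : (0 : ℝ) < (k : ℝ) := by exact_mod_cast hk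
  have h2 : (k : ℝ) * Abar ≤ ∑ j ∈ Finset.range k, A (T^[j] p) := by
    have := mul_le_mul_of_nonneg_left hlow hkpos.le
    rwa [← mul_assoc, mul_inv_cancel₀ hkpos.ne', one_mul] at this
  rw [Finset.sum_sub_distrib, Finset.sum_const, Finset.card_range, nsmul_eq_mul]
  linarith

end AuxD

lemma pow_rpow_aux {lam θ : ℝ} (hlam0 : 0 ≤ lam) (n : ℕ) :
    (lam ^ n) ^ θ = (lam ^ θ) ^ n := by
  rw [← Real.rpow_natCast lam n, ← Real.rpow_mul hlam0, mul_comm,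
    Real.rpow_mul hlam0, Real.rpow_natCast]

lemma geom_tail_le {r : ℝ} (hr0 : 0 ≤ r) (hr1 : r < 1) (k : ℕ) :
    ∑ j ∈ Finset.range k, r ^ (k - j) ≤ r * (1 - r)⁻¹ := by
  have h1 : ∑ j ∈ Finset.range k, r ^ (k - j) = ∑ j ∈ Finset.range k, r ^ (j + 1) := by
    rw [← Finset.sum_range_reflect (fun i => r ^ (i + 1)) k]
    exact Finset.sum_congr rfl fun j hj => by
      rw [Finset.mem_range] at hj
      congr 1
      omega
  rw [h1]
  have h2 : ∑ j ∈ Finset.range k, r ^ (j + 1) = r * ∑ j ∈ Finset.range k, r ^ j := by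
    rw [Finset.mul_sum]
    exact Finset.sum_congr rfl fun j _ => by rw [pow_succ]; ring
  rw [h2]
  apply mul_le_mul_of_nonneg_left _ hr0
  calc ∑ j ∈ Finset.range k, r ^ j ≤ ∑' j : ℕ, r ^ j :=
        Summable.sum_le_tsum _ (fun i _ => pow_nonneg hr0 i) (summable_geometric_of_lt_one hr0 hr1)
    _ = (1 - r)⁻¹ := tsum_geometric_of_lt_one hr0 hr1

/-- Hölder comparison of Birkhoff sums along exponentially close orbit segments. -/
lemma holder_sum_est {X : Type*} [MetricSpace X] {T : X → X} {A : X → ℝ}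
    {CA θ lam B : ℝ}
    (hCA : ∀ x y : X, |A x - A y| ≤ CA * dist x y ^ θ) (hCA0 : 0 ≤ CA)
    (hθ : 0 < θ) (hlam0 : 0 < lam) (hlam1 : lam < 1) (hB : 0 ≤ B)
    {a b : X} {k : ℕ}
    (hab : ∀ j, j < k → dist (T^[j] a) (T^[j] b) ≤ lam ^ (k - j) * B) :
    |∑ j ∈ Finset.range k, A (T^[j] a) - ∑ j ∈ Finset.range k, A (T^[j] b)|
      ≤ (CA * (lam ^ θ * (1 - lam ^ θ)⁻¹)) * B ^ θ := by
  have hr0 : (0 : ℝ) < lam ^ θ := Real.rpow_pos_of_pos hlam0 θ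
  have hr1 : lam ^ θ < 1 := Real.rpow_lt_one hlam0.le hlam1 hθ
  have step : ∀ j, j < k →
      |A (T^[j] a) - A (T^[j] b)| ≤ CA * ((lam ^ θ) ^ (k - j) * B ^ θ) := by
    intro j hj
    have h1 := hCA (T^[j] a) (T^[j] b)
    have h2 : dist (T^[j] a) (T^[j] b) ^ θ ≤ (lam ^ (k - j) * B) ^ θ :=
      Real.rpow_le_rpow dist_nonneg (hab j hj) hθ.le
    have h3 : (lam ^ (k - j) * B) ^ θ = (lam ^ θ) ^ (k - j) * B ^ θ := by
      rw [Real.mul_rpow (pow_nonneg hlam0.le _) hB, pow_rpow_aux hlam0.le]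
    calc |A (T^[j] a) - A (T^[j] b)| ≤ CA * dist (T^[j] a) (T^[j] b) ^ θ := h1
      _ ≤ CA * ((lam ^ (k - j)) * B) ^ θ := mul_le_mul_of_nonneg_left h2 hCA0
      _ = CA * ((lam ^ θ) ^ (k - j) * B ^ θ) := by rw [h3]
  calc |∑ j ∈ Finset.range k, A (T^[j] a) - ∑ j ∈ Finset.range k, A (T^[j] b)|
      = |∑ j ∈ Finset.range k, (A (T^[j] a) - A (T^[j] b))| := by
        rw [Finset.sum_sub_distrib]
    _ ≤ ∑ j ∈ Finset.range k, |A (T^[j] a) - A (T^[j] b)| :=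
        Finset.abs_sum_le_sum_abs _ _
    _ ≤ ∑ j ∈ Finset.range k, CA * ((lam ^ θ) ^ (k - j) * B ^ θ) :=
        Finset.sum_le_sum (fun j hj => step j (Finset.mem_range.1 hj))
    _ = (CA * B ^ θ) * ∑ j ∈ Finset.range k, (lam ^ θ) ^ (k - j) := by
        rw [Finset.mul_sum]
        exact Finset.sum_congr rfl fun j _ => by ring
    _ ≤ (CA * B ^ θ) * (lam ^ θ * (1 - lam ^ θ)⁻¹) := by
        apply mul_le_mul_of_nonneg_left (geom_tail_le hr0.le hr1 k)
        positivity
    _ = (CA * (lam ^ θ * (1 - lam ^ θ)⁻¹)) * B ^ θ := by ring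

lemma sum_range_mul_decomp {M : Type*} [AddCommMonoid M] (g : ℕ → M) (m k : ℕ) :
    ∑ t ∈ Finset.range (m * k), g t = ∑ i ∈ Finset.range m, ∑ j ∈ Finset.range k, g (i * k + j) := by
  induction m with
  | zero => simp
  | succ m ih =>
    have : (m + 1) * k = m * k + k := by ring
    rw [this, Finset.sum_range_add, ih, Finset.sum_range_succ]

/-- Choice of a small parameter beating a power bound. -/
lemma exists_eps {θ : ℝ} (hθ : 0 < θ) {c t : ℝ} (hc : 0 ≤ c) (ht : 0 < t) :
    ∃ e : ℝ, 0 < e ∧ e ≤ t ∧ c * e ^ θ ≤ t := by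
  refine ⟨min t ((t / (c + 1)) ^ θ⁻¹), ?_, min_le_left _ _, ?_⟩
  · apply lt_min ht
    apply Real.rpow_pos_of_pos
    positivity
  · have h0 : (0:ℝ) ≤ min t ((t / (c + 1)) ^ θ⁻¹) := by
      apply le_min ht.le
      positivity
    have h1 : (min t ((t / (c + 1)) ^ θ⁻¹)) ^ θ ≤ ((t / (c + 1)) ^ θ⁻¹) ^ θ :=
      Real.rpow_le_rpow h0 (min_le_right _ _) hθ.le
    have h2 : ((t / (c + 1)) ^ θ⁻¹) ^ θ = t / (c + 1) := by
      rw [← Real.rpow_mul (by positivity), inv_mul_cancel₀ hθ.ne', Real.rpow_one]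
    rw [h2] at h1
    have h3 : c * (min t ((t / (c + 1)) ^ θ⁻¹)) ^ θ ≤ c * (t / (c + 1)) :=
      mul_le_mul_of_nonneg_left h1 hc
    have h4 : c * (t / (c + 1)) ≤ t := by
      rw [div_eq_inv_mul]
      have : c / (c + 1) ≤ 1 := by
        rw [div_le_one (by positivity)]
        linarith
      calc c * ((c + 1)⁻¹ * t) = (c / (c + 1)) * t := by ring
        _ ≤ 1 * t := mul_le_mul_of_nonneg_right this ht.le
        _ = t := one_mul t
    linarith

lemma ereal_le_zero_of_forall {s : EReal} (h : ∀ t : ℝ, 0 < t → s ≤ (t : EReal)) : s ≤ 0 := by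
  by_contra hs
  push_neg at hs
  obtain ⟨r, hr0, hrs⟩ := EReal.exists_between_coe_real hs
  have hr0' : (0 : ℝ) < r := by exact_mod_cast hr0
  exact absurd (h r hr0') (not_le.2 hrs)

lemma ereal_zero_le_of_forall {s : EReal} (h : ∀ t : ℝ, 0 < t → ((-t : ℝ) : EReal) ≤ s) :
    0 ≤ s := by
  by_contra hs
  push_neg at hs
  obtain ⟨r, hsr, hr0⟩ := EReal.exists_between_coe_real hs
  have hr0' : r < (0 : ℝ) := by exact_mod_cast hr0
  have := h (-r) (by linarith)
  rw [neg_neg] at this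
  exact absurd this (not_le.2 hsr)

lemma holder_continuous {X : Type*} [MetricSpace X] {A : X → ℝ} {CA θ : ℝ}
    (hθ : 0 < θ) (hCA0 : 0 ≤ CA)
    (hCA : ∀ x y : X, |A x - A y| ≤ CA * dist x y ^ θ) : Continuous A := by
  rw [Metric.continuous_iff]
  intro x ε hε
  obtain ⟨e, he0, _, he⟩ := exists_eps hθ hCA0 (half_pos hε)
  refine ⟨e, he0, fun y hy => ?_⟩
  have h1 : dist (A y) (A x) ≤ CA * dist y x ^ θ := by
    rw [Real.dist_eq]
    exact hCA y x
  have h2 : dist y x ^ θ ≤ e ^ θ := Real.rpow_le_rpow dist_nonneg hy.le hθ.le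
  have h3 : CA * dist y x ^ θ ≤ CA * e ^ θ := mul_le_mul_of_nonneg_left h2 hCA0
  linarith

/-- `x ∈ Ω(A) ↔ φ_A(x, x) = 0 ↔ h_A(x, x) = 0`. -/
theorem nonwandering_iff_potential_zero {X : Type*} [MetricSpace X] [CompactSpace X] [Nonempty X]
    [MeasurableSpace X] [BorelSpace X]
    (T : X → X) (hT : IsExpandingTransitive T)
    (θ : ℝ) (hθ0 : 0 < θ) (hθ1 : θ ≤ 1)
    (A : X → ℝ) (hA : IsThetaHolder θ A)
    (Abar : ℝ) (hAbar : IsErgMinValue T A Abar) :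
    ∀ x : X,
      (x ∈ nonwanderingSet T A Abar ↔ manePotential T A Abar x x = 0) ∧
      (x ∈ nonwanderingSet T A Abar ↔ peierlsBarrier T A Abar x x = 0) := by
  classical
  obtain ⟨lam, hlam0, hlam1, δ, hδ, hcon⟩ := hT.contracting
  obtain ⟨CA, hCA0, hCA⟩ := hA
  have hcA : Continuous A := holder_continuous hθ0 hCA0 hCA
  obtain ⟨ρ₁, hρ₁, hρball₁⟩ := uniform_open hT.cont hT.isOpenMap hδ
  have hρ : 0 < min ρ₁ (δ / 2) := lt_min hρ₁ (by linarith)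
  set ρ : ℝ := min ρ₁ (δ / 2) with hρdef
  have hρball : ∀ x : X, Metric.ball (T x) ρ ⊆ T '' Metric.ball x (δ / 2) := by
    intro x
    exact (Metric.ball_subset_ball (min_le_left _ _)).trans (hρball₁ x)
  have hδρ : 2 * ρ ≤ δ := by
    have := min_le_right ρ₁ (δ / 2)
    rw [hρdef]
    linarith
  have h1lam : 0 < 1 - lam := by linarith
  set KH : ℝ := CA * (lam ^ θ * (1 - lam ^ θ)⁻¹) with hKH
  have hKH0 : 0 ≤ KH := by
    have h1 : (0:ℝ) < lam ^ θ := Real.rpow_pos_of_pos hlam0 θ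
    have h2 : lam ^ θ < 1 := Real.rpow_lt_one hlam0.le hlam1 hθ0
    have h3 : (0:ℝ) ≤ (1 - lam ^ θ)⁻¹ := inv_nonneg.2 (by linarith)
    exact mul_nonneg hCA0 (mul_nonneg h1.le h3)
  set c2 : ℝ := KH * (2 / (1 - lam)) ^ θ with hc2def
  have hc2 : 0 ≤ c2 := by
    have : (0:ℝ) ≤ (2 / (1 - lam)) ^ θ := Real.rpow_nonneg (by positivity) θ
    positivity
  -- conversion between B and ε
  have hBconv : ∀ ε : ℝ, 0 < ε → KH * (2 * ε / (1 - lam)) ^ θ = c2 * ε ^ θ := by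
    intro ε hε
    have : 2 * ε / (1 - lam) = (2 / (1 - lam)) * ε := by ring
    rw [this, Real.mul_rpow (by positivity) hε.le, hc2def]
    ring
  -- LOWER BOUND via the closing lemma
  have LB : ∀ (x z : X) (k : ℕ), 1 ≤ k → ∀ ε : ℝ, 0 < ε → 2 * ε ≤ (1 - lam) * ρ →
      dist z x < ε → dist (T^[k] z) x < ε →
      -(c2 * ε ^ θ) ≤ ∑ j ∈ Finset.range k, (A (T^[j] z) - Abar) := by
    intro x z k hk ε hε hε₀ hzx hTz
    set B : ℝ := 2 * ε / (1 - lam) with hBdef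
    have hB0 : 0 ≤ B := by positivity
    have hD : dist (T^[k] z) z < (1 - lam) * B := by
      have h1 : dist (T^[k] z) z ≤ dist (T^[k] z) x + dist x z := dist_triangle _ _ _
      have h2 : dist x z < ε := by rwa [dist_comm] at hzx
      have h3 : (1 - lam) * B = 2 * ε := by
        rw [hBdef]; field_simp
      linarith
    have hBρ : B ≤ ρ := by
      rw [hBdef, div_le_iff₀ h1lam]
      linarith [mul_comm ρ (1 - lam)]
    obtain ⟨p, hp, hpest⟩ := periodic_point hρball hcon hδ hlam0 hlam1 hT.cont hδρ hk hB0 hD hBρ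
    have hnn := periodic_nonneg hT.cont hcA hAbar hk hp
    have hest := holder_sum_est hCA hCA0 hθ0 hlam0 hlam1 hB0
      (a := p) (b := z) (k := k) (fun j hj => hpest j hj.le)
    rw [← hKH] at hest
    have habs := abs_le.1 hest
    have e1 : ∑ j ∈ Finset.range k, (A (T^[j] z) - Abar)
        = ∑ j ∈ Finset.range k, A (T^[j] z) - k * Abar := by
      rw [Finset.sum_sub_distrib, Finset.sum_const, Finset.card_range, nsmul_eq_mul]
    have e2 : ∑ j ∈ Finset.range k, (A (T^[j] p) - Abar)
        = ∑ j ∈ Finset.range k, A (T^[j] p) - k * Abar := by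
      rw [Finset.sum_sub_distrib, Finset.sum_const, Finset.card_range, nsmul_eq_mul]
    have hconv := hBconv ε hε
    rw [e1]; rw [e2] at hnn
    rw [← hBdef] at hconv
    linarith [habs.1, habs.2]
  -- UPPER BOUND via multi-loop shadowing
  have UB : ∀ (x z : X) (k : ℕ), 1 ≤ k → ∀ ε : ℝ, 0 < ε → 2 * ε ≤ (1 - lam) * ρ →
      dist z x < ε → dist (T^[k] z) x < ε → ∀ m : ℕ, 1 ≤ m →
      ∃ w, dist w x < ε * (1 + 2 / (1 - lam)) ∧ dist (T^[m * k] w) x < ε ∧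
        ∑ t ∈ Finset.range (m * k), (A (T^[t] w) - Abar)
          ≤ m * ((∑ j ∈ Finset.range k, (A (T^[j] z) - Abar)) + c2 * ε ^ θ) := by
    intro x z k hk ε hε hε₀ hzx hTz m hm
    set B : ℝ := 2 * ε / (1 - lam) with hBdef
    have hB0 : 0 ≤ B := by positivity
    have hD : dist (T^[k] z) z < (1 - lam) * B := by
      have h1 : dist (T^[k] z) z ≤ dist (T^[k] z) x + dist x z := dist_triangle _ _ _
      have h2 : dist x z < ε := by rwa [dist_comm] at hzx
      have h3 : (1 - lam) * B = 2 * ε := by rw [hBdef]; field_simp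
      linarith
    have hBρ : B ≤ ρ := by
      rw [hBdef, div_le_iff₀ h1lam]
      linarith [mul_comm ρ (1 - lam)]
    obtain ⟨w, hw, hest⟩ := multiloop hρball hcon hδ hlam0 hlam1 hk hB0 hD hBρ m
    have hwz : dist w z ≤ B := by
      have := hest 0 hm 0 (by omega)
      simp only [Nat.zero_mul, Nat.zero_add, Function.iterate_zero, id_eq] at this
      calc dist w z ≤ lam ^ (k - 0) * B := this
        _ ≤ 1 * B := mul_le_mul_of_nonneg_right (pow_le_one₀ hlam0.le hlam1.le) hB0
        _ = B := one_mul B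
    refine ⟨w, ?_, ?_, ?_⟩
    · have h1 : dist w x ≤ dist w z + dist z x := dist_triangle _ _ _
      have h2 : B = ε * (2 / (1 - lam)) := by rw [hBdef]; ring
      calc dist w x ≤ dist w z + dist z x := h1
        _ < B + ε := by linarith
        _ = ε * (1 + 2 / (1 - lam)) := by rw [h2]; ring
    · rw [hw]; exact hzx
    · rw [sum_range_mul_decomp (fun t => A (T^[t] w) - Abar) m k]
      have block : ∀ i, i < m →
          ∑ j ∈ Finset.range k, (A (T^[i * k + j] w) - Abar)
            ≤ (∑ j ∈ Finset.range k, (A (T^[j] z) - Abar)) + c2 * ε ^ θ := by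
        intro i hi
        have hiter : ∀ j : ℕ, T^[i * k + j] w = T^[j] (T^[i * k] w) := by
          intro j
          rw [add_comm, Function.iterate_add_apply]
        have hab : ∀ j, j < k → dist (T^[j] (T^[i * k] w)) (T^[j] z) ≤ lam ^ (k - j) * B := by
          intro j hj
          rw [← hiter j]
          exact hest i hi j hj.le
        have hsum := holder_sum_est hCA hCA0 hθ0 hlam0 hlam1 hB0
          (a := T^[i * k] w) (b := z) (k := k) hab
        rw [← hKH] at hsum
        have habs := abs_le.1 hsum
        have e1 : ∑ j ∈ Finset.range k, (A (T^[i * k + j] w) - Abar)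
            = ∑ j ∈ Finset.range k, A (T^[j] (T^[i * k] w)) - k * Abar := by
          rw [Finset.sum_sub_distrib, Finset.sum_const, Finset.card_range, nsmul_eq_mul]
          congr 1
          exact Finset.sum_congr rfl fun j _ => by rw [hiter j]
        have e2 : ∑ j ∈ Finset.range k, (A (T^[j] z) - Abar)
            = ∑ j ∈ Finset.range k, A (T^[j] z) - k * Abar := by
          rw [Finset.sum_sub_distrib, Finset.sum_const, Finset.card_range, nsmul_eq_mul]
        have hconv := hBconv ε hε
        rw [← hBdef] at hconv
        rw [e1, e2]
        linarith [habs.2]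
      calc ∑ i ∈ Finset.range m, ∑ j ∈ Finset.range k, (A (T^[i * k + j] w) - Abar)
          ≤ ∑ i ∈ Finset.range m,
              ((∑ j ∈ Finset.range k, (A (T^[j] z) - Abar)) + c2 * ε ^ θ) :=
            Finset.sum_le_sum fun i hi => block i (Finset.mem_range.1 hi)
        _ = m * ((∑ j ∈ Finset.range k, (A (T^[j] z) - Abar)) + c2 * ε ^ θ) := by
            rw [Finset.sum_const, Finset.card_range, nsmul_eq_mul]
  -- now the six implications
  intro x
  have hρpos2 : 0 < (1 - lam) * ρ / 2 := by positivity
  -- (h2) 0 ≤ manePotential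
  have h2 : (0 : EReal) ≤ manePotential T A Abar x x := by
    apply ereal_zero_le_of_forall
    intro η hη
    obtain ⟨e, he0, he1, he2⟩ := exists_eps hθ0 hc2 (t := min η ((1 - lam) * ρ / 2))
      (lt_min hη hρpos2)
    have he3 : 2 * e ≤ (1 - lam) * ρ := by
      have := he1.trans (min_le_right _ _)
      linarith
    have key : ∀ k : ℕ, 1 ≤ k → ((-η : ℝ) : EReal) ≤ birkhoffInf T A Abar e x x k := by
      intro k hk
      apply le_sInf
      rintro v ⟨z, hz1, hz2, rfl⟩
      have hlb := LB x z k hk e he0 he3 hz1 hz2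
      have : -η ≤ ∑ j ∈ Finset.range k, (A (T^[j] z) - Abar) := by
        have := he2.trans (min_le_left _ _)
        linarith
      exact_mod_cast this
    calc ((-η : ℝ) : EReal)
        ≤ ⨅ k : {n : ℕ // 1 ≤ n}, birkhoffInf T A Abar e x x k.1 :=
          le_iInf fun k => key k.1 k.2
      _ ≤ manePotential T A Abar x x :=
          le_iSup (fun ε : {e' : ℝ // 0 < e'} =>
            ⨅ k : {n : ℕ // 1 ≤ n}, birkhoffInf T A Abar ε.1 x x k.1) ⟨e, he0⟩
  -- (h4) 0 ≤ peierlsBarrier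
  have h4 : (0 : EReal) ≤ peierlsBarrier T A Abar x x := by
    apply ereal_zero_le_of_forall
    intro η hη
    obtain ⟨e, he0, he1, he2⟩ := exists_eps hθ0 hc2 (t := min η ((1 - lam) * ρ / 2))
      (lt_min hη hρpos2)
    have he3 : 2 * e ≤ (1 - lam) * ρ := by
      have := he1.trans (min_le_right _ _)
      linarith
    have key : ∀ k : ℕ, ((-η : ℝ) : EReal) ≤ birkhoffInf T A Abar e x x k := by
      intro k
      apply le_sInf
      rintro v ⟨z, hz1, hz2, rfl⟩
      rcases Nat.eq_zero_or_pos k with hk0 | hk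
      · subst hk0
        have hz : (-η : ℝ) ≤ (0 : ℝ) := by linarith
        simp only [Finset.range_zero, Finset.sum_empty]
        exact_mod_cast hz
      · have hlb := LB x z k hk e he0 he3 hz1 hz2
        have : -η ≤ ∑ j ∈ Finset.range k, (A (T^[j] z) - Abar) := by
          have := he2.trans (min_le_left _ _)
          linarith
        exact_mod_cast this
    calc ((-η : ℝ) : EReal)
        ≤ liminf (fun k : ℕ => birkhoffInf T A Abar e x x k) atTop :=
          Filter.le_liminf_of_le (by isBoundedDefault)
            (Filter.Eventually.of_forall key)
      _ ≤ peierlsBarrier T A Abar x x :=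
          le_iSup (fun ε : {e' : ℝ // 0 < e'} =>
            liminf (fun k : ℕ => birkhoffInf T A Abar ε.1 x x k) atTop) ⟨e, he0⟩
  -- (h1) nonwandering → mane ≤ 0
  have h1 : x ∈ nonwanderingSet T A Abar → manePotential T A Abar x x ≤ 0 := by
    intro hx
    apply iSup_le
    rintro ⟨ε, hε⟩
    apply ereal_le_zero_of_forall
    intro t ht
    obtain ⟨k, hk, y, hy1, hy2, hy3⟩ := hx (min ε t) (lt_min hε ht)
    have hmem : ((∑ j ∈ Finset.range k, (A (T^[j] y) - Abar) : ℝ) : EReal) ∈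
        {v : EReal | ∃ z : X, dist z x < ε ∧ dist (T^[k] z) x < ε ∧
          v = ((∑ j ∈ Finset.range k, (A (T^[j] z) - Abar) : ℝ) : EReal)} := by
      refine ⟨y, ?_, ?_, rfl⟩
      · rw [dist_comm]; exact hy1.trans_le (min_le_left _ _)
      · rw [dist_comm]; exact hy2.trans_le (min_le_left _ _)
    have hsle : (∑ j ∈ Finset.range k, (A (T^[j] y) - Abar) : ℝ) ≤ t := by
      have := (le_abs_self _).trans_lt hy3
      have h2' := min_le_right ε t
      linarith
    calc (⨅ k : {n : ℕ // 1 ≤ n}, birkhoffInf T A Abar ε x x k.1)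
        ≤ birkhoffInf T A Abar ε x x k :=
          iInf_le (fun k : {n : ℕ // 1 ≤ n} => birkhoffInf T A Abar ε x x k.1) ⟨k, hk⟩
      _ ≤ ((∑ j ∈ Finset.range k, (A (T^[j] y) - Abar) : ℝ) : EReal) := sInf_le hmem
      _ ≤ (t : EReal) := by exact_mod_cast hsle
  -- (h3) nonwandering → peierls ≤ 0
  have h3 : x ∈ nonwanderingSet T A Abar → peierlsBarrier T A Abar x x ≤ 0 := by
    intro hx
    apply iSup_le
    rintro ⟨ε, hε⟩
    apply ereal_le_zero_of_forall
    intro t ht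
    apply Filter.liminf_le_of_frequently_le _ (by isBoundedDefault)
    rw [Filter.frequently_atTop]
    intro K
    set m : ℕ := K + 1 with hm
    have hm1 : 1 ≤ m := by omega
    have hmR : (0:ℝ) < m := by positivity
    have hκ : (0:ℝ) < 1 + 2 / (1 - lam) := by positivity
    have htgt : (0:ℝ) < min (min ((1 - lam) * ρ / 2) (ε / (2 * (1 + 2 / (1 - lam)))))
        (min (t / (2 * m)) (t / 2)) := by
      apply lt_min (lt_min hρpos2 (by positivity)) (lt_min (by positivity) (by positivity))
    obtain ⟨e, he0, he1, he2⟩ := exists_eps hθ0 (c := (m : ℝ) * c2) (by positivity) htgt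
    have he_ρ : 2 * e ≤ (1 - lam) * ρ := by
      have := he1.trans ((min_le_left _ _).trans (min_le_left _ _))
      linarith
    have hκ1 : (1:ℝ) ≤ 1 + 2 / (1 - lam) := by
      have : (0:ℝ) ≤ 2 / (1 - lam) := by positivity
      linarith
    have he_ε : e * (1 + 2 / (1 - lam)) ≤ ε / 2 := by
      have h' : e ≤ ε / (2 * (1 + 2 / (1 - lam))) :=
        he1.trans ((min_le_left _ _).trans (min_le_right _ _))
      have hκ0 : (1 + 2 / (1 - lam)) ≠ 0 := ne_of_gt hκ
      calc e * (1 + 2 / (1 - lam))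
          ≤ (ε / (2 * (1 + 2 / (1 - lam)))) * (1 + 2 / (1 - lam)) :=
            mul_le_mul_of_nonneg_right h' hκ.le
        _ = ε / 2 := by field_simp
    have he_ε2 : e ≤ ε / 2 := by
      calc e = e * 1 := (mul_one e).symm
        _ ≤ e * (1 + 2 / (1 - lam)) := mul_le_mul_of_nonneg_left hκ1 he0.le
        _ ≤ ε / 2 := he_ε
    obtain ⟨k, hk, y, hy1, hy2, hy3⟩ := hx e he0
    have hy1' : dist y x < e := by rwa [dist_comm] at hy1
    have hy2' : dist (T^[k] y) x < e := by rwa [dist_comm] at hy2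
    obtain ⟨w, hw1, hw2, hw3⟩ := UB x y k hk e he0 he_ρ hy1' hy2' m hm1
    refine ⟨m * k, ?_, ?_⟩
    · calc K ≤ m := by omega
        _ = m * 1 := (mul_one m).symm
        _ ≤ m * k := Nat.mul_le_mul_left m hk
    · have hwx : dist w x < ε := by
        have := hw1.trans_le he_ε
        linarith
      have hTwx : dist (T^[m * k] w) x < ε := by
        have := hw2.trans_le he_ε2
        linarith
      have hS : ∑ j ∈ Finset.range k, (A (T^[j] y) - Abar) ≤ e := (le_abs_self _).trans hy3.le
      have p1 : (m:ℝ) * (∑ j ∈ Finset.range k, (A (T^[j] y) - Abar)) ≤ (m:ℝ) * e :=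
        mul_le_mul_of_nonneg_left hS hmR.le
      have p2 : (m:ℝ) * e ≤ t / 2 := by
        have h' : e ≤ t / (2 * m) := he1.trans ((min_le_right _ _).trans (min_le_left _ _))
        calc (m:ℝ) * e ≤ (m:ℝ) * (t / (2 * m)) := mul_le_mul_of_nonneg_left h' hmR.le
          _ = t / 2 := by field_simp
      have p3 : (m:ℝ) * (c2 * e ^ θ) ≤ t / 2 := by
        have h' := he2.trans ((min_le_right _ _).trans (min_le_right _ _))
        calc (m:ℝ) * (c2 * e ^ θ) = ((m:ℝ) * c2) * e ^ θ := by ring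
          _ ≤ t / 2 := h'
      have hfin : ∑ s ∈ Finset.range (m * k), (A (T^[s] w) - Abar) ≤ t := by
        have hma : (m:ℝ) * ((∑ j ∈ Finset.range k, (A (T^[j] y) - Abar)) + c2 * e ^ θ)
            = (m:ℝ) * (∑ j ∈ Finset.range k, (A (T^[j] y) - Abar)) + (m:ℝ) * (c2 * e ^ θ) := by
          ring
        linarith [hw3]
      calc birkhoffInf T A Abar ε x x (m * k)
          ≤ ((∑ s ∈ Finset.range (m * k), (A (T^[s] w) - Abar) : ℝ) : EReal) :=
            sInf_le ⟨w, hwx, hTwx, rfl⟩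
        _ ≤ (t : EReal) := by exact_mod_cast hfin
  -- (h5) mane = 0 → nonwandering
  have h5 : manePotential T A Abar x x = 0 → x ∈ nonwanderingSet T A Abar := by
    intro hM
    intro ε hε
    obtain ⟨e, he0, he1, he2⟩ := exists_eps hθ0 hc2
      (t := min (ε / 2) ((1 - lam) * ρ / 2)) (lt_min (by positivity) hρpos2)
    have he3 : 2 * e ≤ (1 - lam) * ρ := by
      have := he1.trans (min_le_right _ _)
      linarith
    have heε : e ≤ ε / 2 := he1.trans (min_le_left _ _)
    have hterm : (⨅ k : {n : ℕ // 1 ≤ n}, birkhoffInf T A Abar e x x k.1) ≤ (0 : EReal) := by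
      rw [← hM]
      exact le_iSup (fun ε' : {e' : ℝ // 0 < e'} =>
        ⨅ k : {n : ℕ // 1 ≤ n}, birkhoffInf T A Abar ε'.1 x x k.1) ⟨e, he0⟩
    have hlt : (⨅ k : {n : ℕ // 1 ≤ n}, birkhoffInf T A Abar e x x k.1) < ((ε : ℝ) : EReal) := by
      refine lt_of_le_of_lt hterm ?_
      exact_mod_cast hε
    rw [iInf_lt_iff] at hlt
    obtain ⟨⟨k, hk⟩, hbk⟩ := hlt
    obtain ⟨v, hvmem, hvlt⟩ := sInf_lt_iff.1 hbk
    obtain ⟨z, hz1, hz2, rfl⟩ := hvmem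
    refine ⟨k, hk, z, ?_, ?_, ?_⟩
    · rw [dist_comm]
      have := hz1
      linarith
    · rw [dist_comm]
      have := hz2
      linarith
    · have hlt' : ∑ j ∈ Finset.range k, (A (T^[j] z) - Abar) < ε := by exact_mod_cast hvlt
      have hlb := LB x z k hk e he0 he3 hz1 hz2
      have hsm : c2 * e ^ θ ≤ ε / 2 := he2.trans (min_le_left _ _)
      rw [abs_lt]
      constructor <;> linarith
  -- (h6) peierls = 0 → nonwandering
  have h6 : peierlsBarrier T A Abar x x = 0 → x ∈ nonwanderingSet T A Abar := by
    intro hP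
    intro ε hε
    obtain ⟨e, he0, he1, he2⟩ := exists_eps hθ0 hc2
      (t := min (ε / 2) ((1 - lam) * ρ / 2)) (lt_min (by positivity) hρpos2)
    have he3 : 2 * e ≤ (1 - lam) * ρ := by
      have := he1.trans (min_le_right _ _)
      linarith
    have heε : e ≤ ε / 2 := he1.trans (min_le_left _ _)
    have hterm : liminf (fun k : ℕ => birkhoffInf T A Abar e x x k) atTop ≤ (0 : EReal) := by
      rw [← hP]
      exact le_iSup (fun ε' : {e' : ℝ // 0 < e'} =>
        liminf (fun k : ℕ => birkhoffInf T A Abar ε'.1 x x k) atTop) ⟨e, he0⟩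
    have hlt : liminf (fun k : ℕ => birkhoffInf T A Abar e x x k) atTop < ((ε : ℝ) : EReal) := by
      refine lt_of_le_of_lt hterm ?_
      exact_mod_cast hε
    have hfreq := Filter.frequently_lt_of_liminf_lt (by isBoundedDefault) hlt
    obtain ⟨k, hbk, hk⟩ := (hfreq.and_eventually (Filter.eventually_ge_atTop 1)).exists
    obtain ⟨v, hvmem, hvlt⟩ := sInf_lt_iff.1 hbk
    obtain ⟨z, hz1, hz2, rfl⟩ := hvmem
    refine ⟨k, hk, z, ?_, ?_, ?_⟩
    · rw [dist_comm]
      have := hz1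
      linarith
    · rw [dist_comm]
      have := hz2
      linarith
    · have hlt' : ∑ j ∈ Finset.range k, (A (T^[j] z) - Abar) < ε := by exact_mod_cast hvlt
      have hlb := LB x z k hk e he0 he3 hz1 hz2
      have hsm : c2 * e ^ θ ≤ ε / 2 := he2.trans (min_le_left _ _)
      rw [abs_lt]
      constructor <;> linarith
  exact ⟨⟨fun hx => le_antisymm (h1 hx) h2, h5⟩, ⟨fun hx => le_antisymm (h3 hx) h4, h6⟩⟩
end
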